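/- arXiv:1611.02824 — 6 statements merged into one kernel-verified Lean document; each statement's English description precedes it below -/
import Mathlib

section
/- Let X and Y be locally compact Hausdorff spaces, k : X × Y → [0,∞] a lower semicontinuous kernel, H ⊆ X and L ⊆ Y. Then the function F : M(H) × L → [0,∞], (μ, y) ↦ U^μ(y) = ∫_X k(x,y) dμ(x), is lower semicontinuous, where M(H) carries the vague topology. -/
open MeasureTheory Topology Filter ENNReal

noncomputable section

/-- The vague topology on measures: the coarsest topology making
`μ ↦ ∫ f dμ` continuous for every continuous compactly supported `f`. -/
def vagueTop (X : Type*) [TopologicalSpace X] [MeasurableSpace X] :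
    TopologicalSpace (Measure X) :=
  ⨅ (f : X → ℝ) (_ : Continuous f) (_ : HasCompactSupport f),
    TopologicalSpace.induced (fun μ : Measure X => ∫ x, f x ∂μ) inferInstance

/-- `μ` is concentrated on `H`: every compact set meets the complement of `H`
in a set of zero (outer) measure. -/
def Concentrated {X : Type*} [TopologicalSpace X] [MeasurableSpace X]
    (μ : Measure X) (H : Set X) : Prop :=
  ∀ K : Set X, IsCompact K → μ (K ∩ Hᶜ) = 0

/-- `M(H)`: the positive regular Radon measures of finite total mass concentrated on `H`. -/
def MM {X : Type*} [TopologicalSpace X] [MeasurableSpace X] (H : Set X) :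
    Set (Measure X) :=
  {μ | IsFiniteMeasure μ ∧ μ.Regular ∧ μ.InnerRegular ∧ Concentrated μ H}

/-- `M₁(H)`: probability measures in `M(H)`. -/
def M1 {X : Type*} [TopologicalSpace X] [MeasurableSpace X] (H : Set X) :
    Set (Measure X) :=
  {μ ∈ MM H | IsProbabilityMeasure μ}

/-- The potential `U^μ(y) = ∫ k(x,y) dμ(x)`. -/
def pot {X Y : Type*} [MeasurableSpace X] (k : X → Y → ℝ≥0∞) (μ : Measure X) (y : Y) : ℝ≥0∞ :=
  ∫⁻ x, k x y ∂μ

/-- The mutual energy `E(μ,ν) = ∫∫ k(x,y) dμ(x)dν(y)`. -/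
def energy {X Y : Type*} [MeasurableSpace X] [MeasurableSpace Y] (k : X → Y → ℝ≥0∞)
    (μ : Measure X) (ν : Measure Y) : ℝ≥0∞ :=
  ∫⁻ p : X × Y, k p.1 p.2 ∂(μ.prod ν)

/-- `q(R,S) = inf_{μ∈R} sup_{ν∈S} E(μ,ν)`. -/
def qup {X Y : Type*} [MeasurableSpace X] [MeasurableSpace Y] (k : X → Y → ℝ≥0∞)
    (R : Set (Measure X)) (S : Set (Measure Y)) : ℝ≥0∞ :=
  ⨅ μ ∈ R, ⨆ ν ∈ S, energy k μ ν

/-- `q̲(R,S) = sup_{μ∈R} inf_{ν∈S} E(μ,ν)`. -/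
def qlow {X Y : Type*} [MeasurableSpace X] [MeasurableSpace Y] (k : X → Y → ℝ≥0∞)
    (R : Set (Measure X)) (S : Set (Measure Y)) : ℝ≥0∞ :=
  ⨆ μ ∈ R, ⨅ ν ∈ S, energy k μ ν

/-- The (Wiener) energy of a set of measures: `w(R) = inf_{μ∈R} E(μ,μ)`. -/
def ww {X : Type*} [MeasurableSpace X] (k : X → X → ℝ≥0∞) (R : Set (Measure X)) : ℝ≥0∞ :=
  ⨅ μ ∈ R, energy k μ μ

/-- Convexity of a set of measures. -/
def ConvexM {X : Type*} [MeasurableSpace X] (R : Set (Measure X)) : Prop :=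
  ∀ μ ∈ R, ∀ ν ∈ R, ∀ a b : ℝ≥0∞, a + b = 1 → a • μ + b • ν ∈ R

/-- The extreme points of a set of measures. -/
def ExtremePts {X : Type*} [MeasurableSpace X] (R : Set (Measure X)) : Set (Measure X) :=
  {σ ∈ R | ∀ μ ∈ R, ∀ ν ∈ R, ∀ a b : ℝ≥0∞, 0 < a → 0 < b → a + b = 1 →
    σ = a • μ + b • ν → σ = μ ∧ σ = ν}

/-- `w*`-compactness (= compactness in the vague topology, these coincide on compact sets). -/
def VCompact {X : Type*} [TopologicalSpace X] [MeasurableSpace X] (R : Set (Measure X)) : Prop :=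
  @IsCompact _ (vagueTop X) R

/-- The (topological) support of a measure. -/
def msupp {X : Type*} [TopologicalSpace X] [MeasurableSpace X] (μ : Measure X) : Set X :=
  {x | ∀ U ∈ 𝓝 x, 0 < μ U}

/-- A measure has compact support. -/
def CompactSupp {X : Type*} [TopologicalSpace X] [MeasurableSpace X] (μ : Measure X) : Prop :=
  ∃ K : Set X, IsCompact K ∧ μ Kᶜ = 0

/-- Frostman's maximum principle. -/
def Frostman {X : Type*} [TopologicalSpace X] [MeasurableSpace X] (k : X → X → ℝ≥0∞) : Prop :=
  ∀ μ : Measure X, μ ∈ MM (Set.univ : Set X) → CompactSupp μ →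
    (⨆ x, pot k μ x) = ⨆ x ∈ msupp μ, pot k μ x

/-- An appropriate set of measures. -/
def Appropriate {X : Type*} [TopologicalSpace X] [MeasurableSpace X] (k : X → X → ℝ≥0∞)
    (H : Set X) (R : Set (Measure X)) : Prop :=
  ∀ μ ∈ R, energy k μ μ ≠ ⊤ → ∀ t : ℝ≥0∞,
    (∀ ν ∈ R, energy k ν ν ≠ ⊤ → (∃ K : Set X, IsCompact K ∧ K ⊆ H ∧ ν Kᶜ = 0) →
      t ≤ energy k ν μ) →
    ∀ᵐ x ∂μ, x ∈ H → t ≤ pot k μ x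

/-- `R_n`: the measures of `R` whose support has at most `n` points. -/
def Rn {X : Type*} [TopologicalSpace X] [MeasurableSpace X]
    (R : Set (Measure X)) (n : ℕ) : Set (Measure X) :=
  {μ ∈ R | ∃ s : Finset X, msupp μ ⊆ ↑s ∧ s.card ≤ n}

/-- `R^e_{Φ,g,A}`: probability measures satisfying the moment equality constraints on `A`. -/
def Re {X Z : Type*} [MeasurableSpace X] (Φ : X → Z → ℝ) (g : Z → ℝ) (A : Set Z) :
    Set (Measure X) :=
  {μ | IsProbabilityMeasure μ ∧ ∀ z ∈ A, ∫ x, Φ x z ∂μ = g z}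


section Aux

open Set

/-- Arithmetic helper for `r / (a+1)`. -/
lemma aux_div (a : ℝ≥0∞) (ha : a ≠ ∞) {r : ℝ≥0∞} (hr0 : r ≠ 0) (hrt : r ≠ ∞) :
    r / (a + 1) ≠ 0 ∧ r / (a + 1) ≠ ∞ ∧ r / (a + 1) * a ≤ r := by
  have hat : a + 1 ≠ ∞ := ENNReal.add_ne_top.2 ⟨ha, ENNReal.one_ne_top⟩
  refine ⟨?_, ?_, ?_⟩
  · simp [ENNReal.div_eq_zero_iff, hr0, hat]
  · have h1 : r / (a + 1) ≤ r := by
      apply ENNReal.div_le_of_le_mul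
      exact le_mul_of_one_le_right (by simp) le_add_self
    exact (h1.trans_lt (lt_top_iff_ne_top.2 hrt)).ne
  · calc r / (a + 1) * a ≤ r / (a + 1) * (a + 1) := mul_le_mul_right le_self_add _
      _ = r := ENNReal.div_mul_cancel (by simp) hat

lemma aux_hcs_sum {ι X : Type*} [TopologicalSpace X] [T2Space X] (s : Finset ι) (F : ι → X → ℝ)
    (h : ∀ j ∈ s, HasCompactSupport (F j)) :
    HasCompactSupport fun x => ∑ j ∈ s, F j x := by
  classical
  apply HasCompactSupport.intro (K := ⋃ j ∈ (s : Set ι), tsupport (F j))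
  · exact s.finite_toSet.isCompact_biUnion fun j hj => h j hj
  · intro x hx
    simp only [Set.mem_iUnion, not_exists] at hx
    exact Finset.sum_eq_zero fun j hj => image_eq_zero_of_notMem_tsupport (hx j hj)

set_option maxHeartbeats 1000000 in
/-- Approximation from below of the lower integral of a lower semicontinuous function by
integrals of continuous compactly supported functions, w.r.t. an inner regular finite measure. -/
lemma aux_approx {X : Type*} [TopologicalSpace X] [MeasurableSpace X]
    [BorelSpace X] [LocallyCompactSpace X] [T2Space X]
    (μ : Measure X) [IsFiniteMeasure μ] (hreg : μ.InnerRegular)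
    (φ : X → ℝ≥0∞) (hφ : LowerSemicontinuous φ) {c : ℝ≥0∞}
    (hc : c < ∫⁻ x, φ x ∂μ) :
    ∃ f : X → ℝ, Continuous f ∧ HasCompactSupport f ∧ (∀ x, 0 ≤ f x) ∧
      (∀ x, ENNReal.ofReal (f x) ≤ φ x) ∧ c < ∫⁻ x, ENNReal.ofReal (f x) ∂μ := by
  classical
  haveI : μ.InnerRegular := hreg
  have hφm : Measurable φ := hφ.measurable
  -- truncate φ
  obtain ⟨M, hM⟩ : ∃ M : ℕ, c < ∫⁻ x, min (φ x) M ∂μ := by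
    have hmono : Monotone fun (n : ℕ) => fun (x : X) => min (φ x) (n : ℝ≥0∞) := by
      intro a b hab x
      exact min_le_min le_rfl (by exact_mod_cast hab)
    have hptw : ∀ x, (⨆ n : ℕ, min (φ x) (n : ℝ≥0∞)) = φ x := by
      intro x
      have h1 : (⨆ n : ℕ, min (φ x) (n : ℝ≥0∞)) = (⨆ n : ℕ, (n : ℝ≥0∞)) ⊓ φ x := by
        rw [iSup_inf_eq]
        exact iSup_congr fun n => by rw [inf_comm]
      rw [h1, ENNReal.iSup_natCast, top_inf_eq]
    have heq := lintegral_iSup (μ := μ) (fun n : ℕ => hφm.min measurable_const) hmono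
    simp only [hptw] at heq
    rw [heq] at hc
    exact lt_iSup_iff.mp hc
  set ψ : X → ℝ≥0∞ := fun x => min (φ x) M with hψdef
  have hψm : Measurable ψ := hφm.min measurable_const
  have hψφ : ∀ x, ψ x ≤ φ x := fun x => min_le_left _ _
  have hψM : ∀ x, ψ x ≤ (M : ℝ≥0∞) := fun x => min_le_right _ _
  have hψlsc : LowerSemicontinuous ψ := by
    intro x b hb
    rcases lt_min_iff.1 hb with ⟨hb1, hb2⟩
    filter_upwards [hφ x b hb1] with x' hx'
    exact lt_min_iff.2 ⟨hx', hb2⟩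
  -- choose the step height h
  obtain ⟨r, hr0, hcr⟩ := ENNReal.lt_iff_exists_add_pos_lt.mp hM
  have hrne : (r : ℝ≥0∞) ≠ 0 := by exact_mod_cast hr0.ne'
  obtain ⟨hh0, hht, hhμ⟩ := aux_div (μ Set.univ) (measure_ne_top μ _) hrne ENNReal.coe_ne_top
  set h : ℝ≥0∞ := (r : ℝ≥0∞) / (μ Set.univ + 1) with hhdef
  -- choose the number of steps n
  obtain ⟨n, hn⟩ := ENNReal.exists_nat_gt ((ENNReal.div_lt_top (ENNReal.natCast_ne_top M) hh0).ne)
  have hMn : (M : ℝ≥0∞) ≤ n * h :=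
    (ENNReal.div_le_iff_le_mul (Or.inl hh0) (Or.inl hht)).1 hn.le
  have hn0 : n ≠ 0 := by
    rintro rfl
    simp at hn
  -- the layers
  set V : ℕ → Set X := fun j => {x | ((j : ℝ≥0∞) + 1) * h < ψ x} with hVdef
  have hVopen : ∀ j, IsOpen (V j) := fun j => hψlsc.isOpen_preimage _
  have hVmeas : ∀ j, MeasurableSet (V j) := fun j => (hVopen j).measurableSet
  set G : X → ℝ≥0∞ := fun x => ∑ j ∈ Finset.range n, (V j).indicator (fun _ => h) x with hGdef
  have hsum_ite : ∀ m : ℕ, m ≤ n →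
      (∑ j ∈ Finset.range n, if j < m then h else 0) = (m : ℝ≥0∞) * h := by
    intro m hmn
    rw [← Finset.sum_filter]
    have hfil : (Finset.range n).filter (fun j => j < m) = Finset.range m := by
      ext j
      simp only [Finset.mem_filter, Finset.mem_range]
      omega
    rw [hfil, Finset.sum_const, Finset.card_range, nsmul_eq_mul]
  -- pointwise bounds
  have hG_le : ∀ x, G x ≤ ψ x := by
    intro x
    by_cases hex : ∃ j ∈ Finset.range n, x ∈ V j
    · obtain ⟨j₀, hj₀n, hj₀⟩ := hex
      set P : ℕ → Prop := fun j => (j : ℝ≥0∞) * h < ψ x with hPdef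
      have hP : P (j₀ + 1) := by
        have hj₀' : ((j₀ : ℝ≥0∞) + 1) * h < ψ x := hj₀
        simp only [hPdef, Nat.cast_add, Nat.cast_one]
        exact hj₀'
      have hj₀n' : j₀ + 1 ≤ n := Finset.mem_range.1 hj₀n
      set m := Nat.findGreatest P n with hm
      have hPm : P m := Nat.findGreatest_spec hj₀n' hP
      have hmn : m ≤ n := Nat.findGreatest_le n
      have hbound : ∀ j ∈ Finset.range n,
          (V j).indicator (fun _ => h) x ≤ if j < m then h else 0 := by
        intro j hj
        by_cases hxj : x ∈ V j
        · have hPj : P (j + 1) := by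
            have hxj' : ((j : ℝ≥0∞) + 1) * h < ψ x := hxj
            simp only [hPdef, Nat.cast_add, Nat.cast_one]
            exact hxj'
          have hjm : j + 1 ≤ m := Nat.le_findGreatest (Finset.mem_range.1 hj) hPj
          rw [Set.indicator_of_mem hxj, if_pos (by omega)]
        · simp [Set.indicator_of_notMem hxj]
      calc G x ≤ ∑ j ∈ Finset.range n, if j < m then h else 0 := Finset.sum_le_sum hbound
        _ = (m : ℝ≥0∞) * h := hsum_ite m hmn
        _ ≤ ψ x := hPm.le
    · push_neg at hex
      have hz : G x = 0 := Finset.sum_eq_zero fun j hj => Set.indicator_of_notMem (hex j hj) _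
      simp [hz]
  have hψ_le : ∀ x, ψ x ≤ G x + h := by
    intro x
    by_cases hx : ψ x ≤ h
    · exact hx.trans le_add_self
    push_neg at hx
    set P : ℕ → Prop := fun j => (j : ℝ≥0∞) * h < ψ x with hPdef
    have hP1 : P 1 := by
      simp only [hPdef, Nat.cast_one, one_mul]
      exact hx
    have h1n : 1 ≤ n := Nat.one_le_iff_ne_zero.2 hn0
    set m := Nat.findGreatest P n with hm
    have hPm : P m := Nat.findGreatest_spec h1n hP1
    have hmn : m ≤ n := Nat.findGreatest_le n
    have hmlt : m < n := by
      rcases lt_or_eq_of_le hmn with h' | h'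
      · exact h'
      · exfalso
        have hle : ψ x ≤ (n : ℝ≥0∞) * h := (hψM x).trans hMn
        rw [h'] at hPm
        exact absurd hle (not_le.2 hPm)
    have h1' : Nat.findGreatest P n < m + 1 := by omega
    have hnot : ¬ P (m + 1) := Nat.findGreatest_is_greatest h1' (by omega)
    have hup : ψ x ≤ ((m : ℝ≥0∞) + 1) * h := by
      have h1 := not_lt.1 hnot
      simp only [hPdef, Nat.cast_add, Nat.cast_one] at h1
      exact h1
    have hlow : (m : ℝ≥0∞) * h ≤ G x := by
      have hbound : ∀ j ∈ Finset.range n,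
          (if j < m then h else 0) ≤ (V j).indicator (fun _ => h) x := by
        intro j hj
        by_cases hjm : j < m
        · have hxj : x ∈ V j := by
            have h1 : ((j : ℝ≥0∞) + 1) * h ≤ (m : ℝ≥0∞) * h := by
              apply mul_le_mul_left
              have : ((j + 1 : ℕ) : ℝ≥0∞) ≤ (m : ℝ≥0∞) := by exact_mod_cast hjm
              simpa [Nat.cast_add, Nat.cast_one] using this
            exact lt_of_le_of_lt h1 hPm
          rw [if_pos hjm, Set.indicator_of_mem hxj]
        · simp [hjm]
      calc (m : ℝ≥0∞) * h = ∑ j ∈ Finset.range n, if j < m then h else 0 :=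
            (hsum_ite m hmn).symm
        _ ≤ G x := Finset.sum_le_sum hbound
    calc ψ x ≤ ((m : ℝ≥0∞) + 1) * h := hup
      _ = (m : ℝ≥0∞) * h + h := by ring
      _ ≤ G x + h := add_le_add_left hlow h
  -- integral of G
  have hGint : ∫⁻ x, G x ∂μ = ∑ j ∈ Finset.range n, h * μ (V j) := by
    rw [hGdef]
    rw [lintegral_finset_sum _ (fun j _ => measurable_const.indicator (hVmeas j))]
    exact Finset.sum_congr rfl fun j _ => by
      rw [lintegral_indicator (hVmeas j), setLIntegral_const]
  have hcG : c < ∑ j ∈ Finset.range n, h * μ (V j) := by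
    have h1 : ∫⁻ x, ψ x ∂μ ≤ ∫⁻ x, G x ∂μ + h * μ Set.univ := by
      calc ∫⁻ x, ψ x ∂μ ≤ ∫⁻ x, (G x + h) ∂μ := lintegral_mono hψ_le
        _ = ∫⁻ x, G x ∂μ + h * μ Set.univ := by
            rw [lintegral_add_right _ measurable_const, lintegral_const]
    have h2 : c + h * μ Set.univ < ∫⁻ x, G x ∂μ + h * μ Set.univ := by
      calc c + h * μ Set.univ ≤ c + r := add_le_add_right hhμ c
        _ < ∫⁻ x, ψ x ∂μ := hcr
        _ ≤ _ := h1
    have h3 : h * μ Set.univ ≠ ∞ := ENNReal.mul_ne_top hht (measure_ne_top μ _)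
    rw [← hGint]
    exact (ENNReal.add_lt_add_iff_right h3).1 h2
  -- approximate the layers by compact sets
  obtain ⟨r₂, hr₂0, hcr₂⟩ := ENNReal.lt_iff_exists_add_pos_lt.mp hcG
  have hnh0 : (n : ℝ≥0∞) * h ≠ 0 :=
    mul_ne_zero (by exact_mod_cast hn0) hh0
  have hnht : (n : ℝ≥0∞) * h ≠ ∞ := ENNReal.mul_ne_top (ENNReal.natCast_ne_top n) hht
  set δ : ℝ≥0∞ := (r₂ : ℝ≥0∞) / ((n : ℝ≥0∞) * h) with hδdef
  have hδ0 : δ ≠ 0 := by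
    simp only [hδdef, ne_eq, ENNReal.div_eq_zero_iff, not_or]
    exact ⟨by exact_mod_cast hr₂0.ne', hnht⟩
  have hδh : (n : ℝ≥0∞) * (h * δ) = r₂ := by
    rw [hδdef, ← mul_assoc]
    exact ENNReal.mul_div_cancel hnh0 hnht
  have hK : ∀ j, ∃ K : Set X, K ⊆ V j ∧ IsCompact K ∧ μ (V j) ≤ μ K + δ := by
    intro j
    obtain ⟨K, hKV, hKc, hKμ⟩ := (hVmeas j).exists_isCompact_lt_add (measure_ne_top μ _) hδ0
    exact ⟨K, hKV, hKc, hKμ.le⟩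
  choose K hKV hKcomp hKμ using hK
  -- Urysohn functions
  have hfex : ∀ j, ∃ f : C(X, ℝ), Set.EqOn f 1 (K j) ∧ Set.EqOn f 0 (V j)ᶜ ∧
      HasCompactSupport f ∧ ∀ x, f x ∈ Set.Icc (0 : ℝ) 1 := by
    intro j
    exact exists_continuous_one_zero_of_isCompact (hKcomp j) (hVopen j).isClosed_compl
      (disjoint_compl_right_iff_subset.mpr (hKV j))
  choose f hf1 hf0 hfc hf01 using hfex
  have hG_le' : ∀ x, (∑ j ∈ Finset.range n, (V j).indicator (fun _ => h) x) ≤ ψ x := hG_le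
  clear_value G δ V ψ h
  refine ⟨fun x => ∑ j ∈ Finset.range n, h.toReal * f j x, ?_, ?_, ?_, ?_, ?_⟩
  · exact continuous_finset_sum _ fun j _ => continuous_const.mul (f j).continuous
  · refine aux_hcs_sum _ _ fun j _ => (hfc j).mono ?_
    intro x hx
    simp only [Function.mem_support] at hx ⊢
    exact fun h0 => hx (by rw [h0, mul_zero])
  · exact fun x => Finset.sum_nonneg fun j _ =>
      mul_nonneg ENNReal.toReal_nonneg (hf01 j x).1
  · intro x
    rw [ENNReal.ofReal_sum_of_nonneg fun j _ =>
      mul_nonneg ENNReal.toReal_nonneg (hf01 j x).1]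
    refine le_trans (Finset.sum_le_sum ?_) ((hG_le' x).trans (hψφ x))
    intro j hj
    rw [ENNReal.ofReal_mul ENNReal.toReal_nonneg, ENNReal.ofReal_toReal hht]
    by_cases hxj : x ∈ V j
    · rw [Set.indicator_of_mem hxj]
      calc h * ENNReal.ofReal (f j x) ≤ h * 1 :=
            mul_le_mul_right (ENNReal.ofReal_le_one.2 (hf01 j x).2) h
        _ = h := mul_one h
    · have hfj0 : f j x = 0 := hf0 j hxj
      simp [Set.indicator_of_notMem hxj, hfj0]
  · have hpt : ∀ x, (∑ j ∈ Finset.range n, (K j).indicator (fun _ => h) x) ≤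
        ENNReal.ofReal (∑ j ∈ Finset.range n, h.toReal * f j x) := by
      intro x
      rw [ENNReal.ofReal_sum_of_nonneg fun j _ =>
        mul_nonneg ENNReal.toReal_nonneg (hf01 j x).1]
      refine Finset.sum_le_sum fun j hj => ?_
      by_cases hxj : x ∈ K j
      · rw [Set.indicator_of_mem hxj, ENNReal.ofReal_mul ENNReal.toReal_nonneg,
          ENNReal.ofReal_toReal hht]
        have hfj1 : f j x = 1 := hf1 j hxj
        simp [hfj1]
      · simp [Set.indicator_of_notMem hxj]
    have hKmeas : ∀ j, MeasurableSet (K j) := fun j => (hKcomp j).isClosed.measurableSet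
    have h5 : ∑ j ∈ Finset.range n, h * μ (K j) ≤
        ∫⁻ x, ENNReal.ofReal (∑ j ∈ Finset.range n, h.toReal * f j x) ∂μ := by
      have heq : ∫⁻ x, (∑ j ∈ Finset.range n, (K j).indicator (fun _ => h) x) ∂μ =
          ∑ j ∈ Finset.range n, h * μ (K j) := by
        rw [lintegral_finset_sum _ (fun j _ => measurable_const.indicator (hKmeas j))]
        exact Finset.sum_congr rfl fun j _ => by
          rw [lintegral_indicator (hKmeas j), setLIntegral_const]
      rw [← heq]
      exact lintegral_mono hpt
    have h6 : ∑ j ∈ Finset.range n, h * μ (V j) ≤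
        (∑ j ∈ Finset.range n, h * μ (K j)) + r₂ := by
      calc ∑ j ∈ Finset.range n, h * μ (V j)
          ≤ ∑ j ∈ Finset.range n, (h * μ (K j) + h * δ) := by
            refine Finset.sum_le_sum fun j _ => ?_
            rw [← mul_add]
            exact mul_le_mul_right (hKμ j) h
        _ = (∑ j ∈ Finset.range n, h * μ (K j)) + n * (h * δ) := by
            rw [Finset.sum_add_distrib, Finset.sum_const, Finset.card_range, nsmul_eq_mul]
        _ = (∑ j ∈ Finset.range n, h * μ (K j)) + r₂ := by rw [hδh]
    have h7 : c + (r₂ : ℝ≥0∞) < (∑ j ∈ Finset.range n, h * μ (K j)) + r₂ :=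
      lt_of_lt_of_le hcr₂ h6
    exact lt_of_lt_of_le ((ENNReal.add_lt_add_iff_right ENNReal.coe_ne_top).1 h7) h5

/-- A continuous compactly supported function yields a vaguely continuous integral map. -/
lemma aux_vague_cont {X : Type*} [TopologicalSpace X] [MeasurableSpace X]
    (g : X → ℝ) (hg : Continuous g) (hgc : HasCompactSupport g) :
    Continuous[vagueTop X, _] fun μ : Measure X => ∫ x, g x ∂μ := by
  unfold vagueTop
  exact continuous_iInf_dom (continuous_iInf_dom (i := hg)
    (continuous_iInf_dom (i := hgc) continuous_induced_dom))

end Aux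

/-- lower semicontinuity of `(μ, y) ↦ U^μ(y)` on `M(H) × L`
with the vague topology on `M(H)`. -/
theorem statement0 {X Y : Type*} [TopologicalSpace X] [MeasurableSpace X] [BorelSpace X]
    [LocallyCompactSpace X] [T2Space X]
    [TopologicalSpace Y] [LocallyCompactSpace Y] [T2Space Y]
    (k : X → Y → ℝ≥0∞) (hk : LowerSemicontinuous fun p : X × Y => k p.1 p.2)
    (H : Set X) (L : Set Y) :
    letI : TopologicalSpace (Measure X) := vagueTop X
    LowerSemicontinuous fun p : ↥(MM H) × ↥L => pot k (p.1 : Measure X) (p.2 : Y) := by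
  classical
  letI : TopologicalSpace (Measure X) := vagueTop X
  intro p c hc
  set μ₀ : Measure X := (p.1 : Measure X) with hμ₀def
  set y₀ : Y := (p.2 : Y) with hy₀def
  obtain ⟨hfin, -, hinner, -⟩ : IsFiniteMeasure μ₀ ∧ μ₀.Regular ∧ μ₀.InnerRegular ∧
      Concentrated μ₀ H := p.1.2
  haveI := hfin
  have hcne : c ≠ ∞ := hc.ne_top
  have hφ : LowerSemicontinuous fun x => k x y₀ := by
    have := LowerSemicontinuous.comp hk (g := fun x : X => (x, y₀))
      (continuous_id.prodMk continuous_const)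
    exact this
  have hc' : c < ∫⁻ x, k x y₀ ∂μ₀ := hc
  obtain ⟨f, hfcont, hfcs, hfnn, hfle, hfint⟩ := aux_approx μ₀ hinner _ hφ hc'
  -- shave off ε
  obtain ⟨r, hr0, hcr⟩ := ENNReal.lt_iff_exists_add_pos_lt.mp hfint
  have hrne : (r : ℝ≥0∞) ≠ 0 := by exact_mod_cast hr0.ne'
  obtain ⟨hη0, hηt, hημ⟩ := aux_div (μ₀ Set.univ) (measure_ne_top μ₀ _) hrne ENNReal.coe_ne_top
  set η : ℝ≥0∞ := (r : ℝ≥0∞) / (μ₀ Set.univ + 1) with hηdef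
  set ε : ℝ := η.toReal with hεdef
  have hε0 : 0 < ε := ENNReal.toReal_pos hη0 hηt
  set g : X → ℝ := fun x => max (f x - ε) 0 with hgdef
  have hgcont : Continuous g := (hfcont.sub continuous_const).max continuous_const
  have hgcs : HasCompactSupport g := by
    apply hfcs.mono
    intro x hx
    simp only [Function.mem_support] at hx ⊢
    intro hfx
    apply hx
    simp [hgdef, hfx, hε0.le]
  have hgnn : ∀ x, 0 ≤ g x := fun x => le_max_right _ _
  have hfg : ∀ x, ENNReal.ofReal (f x) ≤ ENNReal.ofReal (g x) + η := by
    intro x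
    calc ENNReal.ofReal (f x) ≤ ENNReal.ofReal (g x + ε) := by
          apply ENNReal.ofReal_le_ofReal
          have h1 := le_max_left (f x - ε) (0 : ℝ)
          simp only [hgdef]
          linarith
      _ = ENNReal.ofReal (g x) + ENNReal.ofReal ε := ENNReal.ofReal_add (hgnn x) hε0.le
      _ = ENNReal.ofReal (g x) + η := by rw [hεdef, ENNReal.ofReal_toReal hηt]
  have hcJ : c < ∫⁻ x, ENNReal.ofReal (g x) ∂μ₀ := by
    have h1 : ∫⁻ x, ENNReal.ofReal (f x) ∂μ₀ ≤
        ∫⁻ x, ENNReal.ofReal (g x) ∂μ₀ + η * μ₀ Set.univ := by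
      calc ∫⁻ x, ENNReal.ofReal (f x) ∂μ₀ ≤ ∫⁻ x, (ENNReal.ofReal (g x) + η) ∂μ₀ :=
            lintegral_mono hfg
        _ = _ := by rw [lintegral_add_right _ measurable_const, lintegral_const]
    have h2 : c + (r : ℝ≥0∞) < (∫⁻ x, ENNReal.ofReal (g x) ∂μ₀) + r :=
      hcr.trans_le (h1.trans (add_le_add_right hημ _))
    exact (ENNReal.add_lt_add_iff_right ENNReal.coe_ne_top).1 h2
  -- the tube
  set W : Set (X × Y) := {q | ENNReal.ofReal (f q.1 - ε / 2) < k q.1 q.2} with hWdef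
  have hu : Continuous fun q : X × Y => ENNReal.ofReal (f q.1 - ε / 2) :=
    ENNReal.continuous_ofReal.comp ((hfcont.comp continuous_fst).sub continuous_const)
  have hWopen : IsOpen W := by
    rw [isOpen_iff_mem_nhds]
    intro q hq
    obtain ⟨b, hb1, hb2⟩ := exists_between (show ENNReal.ofReal (f q.1 - ε / 2) < k q.1 q.2 from hq)
    have e1 : ∀ᶠ q' in 𝓝 q, b < k q'.1 q'.2 := hk q b hb2
    have e2 : ∀ᶠ q' in 𝓝 q, ENNReal.ofReal (f q'.1 - ε / 2) < b :=
      (hu.tendsto q).eventually_lt_const hb1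
    filter_upwards [e1, e2] with q' h1 h2
    exact h2.trans h1
  set C : Set X := {x | ε ≤ f x} with hCdef
  have hCclosed : IsClosed C := isClosed_le continuous_const hfcont
  have hCsub : C ⊆ tsupport f := fun x hx => subset_tsupport f (by
    simp only [Function.mem_support]
    exact ne_of_gt (lt_of_lt_of_le hε0 hx))
  have hCcomp : IsCompact C := hfcs.of_isClosed_subset hCclosed hCsub
  have hCW : C ×ˢ ({y₀} : Set Y) ⊆ W := by
    rintro ⟨x, y⟩ ⟨hx, hy⟩
    simp only [Set.mem_singleton_iff] at hy
    subst hy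
    show ENNReal.ofReal (f x - ε / 2) < k x y₀
    calc ENNReal.ofReal (f x - ε / 2) < ENNReal.ofReal (f x) := by
          rw [ENNReal.ofReal_lt_ofReal_iff (lt_of_lt_of_le hε0 hx)]
          linarith
      _ ≤ k x y₀ := hfle x
  obtain ⟨u, v, huo, hvo, hCu, hyv, huv⟩ :=
    generalized_tube_lemma hCcomp isCompact_singleton hWopen hCW
  have hyv' : y₀ ∈ v := hyv rfl
  have keyD : ∀ y ∈ v, ∀ x, ENNReal.ofReal (g x) ≤ k x y := by
    intro y hy x
    by_cases hx : ε ≤ f x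
    · have hxW : (x, y) ∈ W := huv ⟨hCu hx, hy⟩
      have hxW' : ENNReal.ofReal (f x - ε / 2) < k x y := hxW
      refine le_trans (ENNReal.ofReal_le_ofReal ?_) hxW'.le
      apply max_le
      · linarith
      · linarith
    · push_neg at hx
      have hgx : g x = 0 := max_eq_right (by linarith)
      simp [hgx]
  -- integral facts for finite measures
  have hInt : ∀ (μ : Measure X), IsFiniteMeasure μ →
      (∫ x, g x ∂μ = (∫⁻ x, ENNReal.ofReal (g x) ∂μ).toReal ∧
        ∫⁻ x, ENNReal.ofReal (g x) ∂μ ≠ ∞) := by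
    intro μ hμ
    haveI := hμ
    have hint : Integrable g μ := hgcont.integrable_of_hasCompactSupport hgcs
    constructor
    · exact integral_eq_lintegral_of_nonneg_ae (Filter.Eventually.of_forall hgnn)
        hgcont.aestronglyMeasurable
    · have h1 : ∫⁻ x, ENNReal.ofReal (g x) ∂μ = ∫⁻ x, (‖g x‖₊ : ℝ≥0∞) ∂μ :=
        lintegral_congr fun x => (Real.enorm_eq_ofReal (hgnn x)).symm
      rw [h1]
      exact hint.2.ne
  have hecont : Continuous fun μ : Measure X => ∫ x, g x ∂μ := aux_vague_cont g hgcont hgcs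
  have hμ₀N : c.toReal < ∫ x, g x ∂μ₀ := by
    obtain ⟨heq, hne⟩ := hInt μ₀ hfin
    rw [heq]
    exact (ENNReal.toReal_lt_toReal hcne hne).2 hcJ
  set N : Set (Measure X) := (fun μ : Measure X => ∫ x, g x ∂μ) ⁻¹' Set.Ioi c.toReal with hNdef
  have hNopen : IsOpen N := isOpen_Ioi.preimage hecont
  have hmem : ((Subtype.val ⁻¹' N) ×ˢ (Subtype.val ⁻¹' v) : Set (↥(MM H) × ↥L)) ∈ 𝓝 p := by
    apply prod_mem_nhds
    · exact (hNopen.preimage continuous_subtype_val).mem_nhds hμ₀N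
    · exact (hvo.preimage continuous_subtype_val).mem_nhds hyv'
  filter_upwards [hmem] with q hq
  obtain ⟨hq1, hq2⟩ := hq
  have hqfin : IsFiniteMeasure (q.1 : Measure X) := q.1.2.1
  obtain ⟨heq, hne⟩ := hInt q.1 hqfin
  have h7 : c < ∫⁻ x, ENNReal.ofReal (g x) ∂(q.1 : Measure X) := by
    have h8 : c.toReal < (∫⁻ x, ENNReal.ofReal (g x) ∂(q.1 : Measure X)).toReal := by
      rw [← heq]
      exact hq1
    exact (ENNReal.toReal_lt_toReal hcne hne).1 h8
  calc c < ∫⁻ x, ENNReal.ofReal (g x) ∂(q.1 : Measure X) := h7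
    _ ≤ ∫⁻ x, k x (q.2 : Y) ∂(q.1 : Measure X) := lintegral_mono fun x => keyD _ hq2 x
    _ = pot k (q.1 : Measure X) (q.2 : Y) := rfl

end
end

section
/- Let k be a lower semicontinuous symmetric kernel on X × X with values in [0,∞], let H, L ⊆ X, and let R(H), S(H) ⊆ M(H) and R̃(L), S̃(L) ⊆ M(L) be sets of measures such that: (i) inf_{ν∈S̃(L)} ∫_L U^μ dν ≤ inf_{ν∈R̃(L)} ∫_L U^μ dν for all μ ∈ M(H), and (ii) sup_{ν∈R(H)} ∫_H U^μ dν ≤ sup_{ν∈S(H)} ∫_H U^μ dν for all μ ∈ M(L). Then q̲(R(H), S̃(L)) ≤ q(R̃(L), S(H)). -/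
open MeasureTheory Topology Filter ENNReal

noncomputable section

section AuxStatement3
open NNReal

private lemma exists_theta {a b : ℝ≥0∞} (hab : a < b) (hb : b ≠ ⊤) :
    ∃ θ : ℝ≥0∞, θ < 1 ∧ a < θ * b := by
  have hb0 : b ≠ 0 := by rintro rfl; simp at hab
  have h1 : a / b < 1 := by
    rw [ENNReal.div_lt_iff (Or.inl hb0) (Or.inl hb), one_mul]; exact hab
  obtain ⟨θ, hθ1, hθ2⟩ := exists_between h1
  exact ⟨θ, hθ2, by rwa [ENNReal.div_lt_iff (Or.inl hb0) (Or.inl hb)] at hθ1⟩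


private lemma H1 {X : Type*} [TopologicalSpace X] [MeasurableSpace X]
    (μ : Measure X) [IsFiniteMeasure μ] (hreg : μ.InnerRegular)
    (f : X → ℝ≥0∞) {c : ℝ≥0∞} (hc : c < ∫⁻ x, f x ∂μ) :
    ∃ (s : Finset ℝ≥0) (K : ℝ≥0 → Set X) (d : ℝ≥0 → ℝ≥0∞),
      (∀ r ∈ s, IsCompact (K r)) ∧
      (∀ r ∈ s, ∀ r' ∈ s, r ≠ r' → Disjoint (K r) (K r')) ∧
      (∀ r ∈ s, ∀ x ∈ K r, d r < f x) ∧
      c < ∑ r ∈ s, d r * μ (K r) := by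
  rw [lintegral_eq_nnreal] at hc
  obtain ⟨φ, hc⟩ := lt_iSup_iff.mp hc
  obtain ⟨hφ, hc⟩ := lt_iSup_iff.mp hc
  rw [SimpleFunc.map_lintegral] at hc
  set S := ∑ r ∈ φ.range, (r : ℝ≥0∞) * μ (φ ⁻¹' {r}) with hS
  have hSfin : S ≠ ⊤ := by
    refine (ENNReal.sum_lt_top.mpr fun r _ => ?_).ne
    exact ENNReal.mul_lt_top ENNReal.coe_lt_top (measure_lt_top μ _)
  obtain ⟨θ, hθ1, hθ2⟩ := exists_theta hc hSfin
  have hθS : θ * S ≠ ⊤ := by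
    exact ENNReal.mul_ne_top (hθ1.trans_le le_top).ne hSfin
  obtain ⟨τ, hτ1, hτ2⟩ := exists_theta hθ2 hθS
  -- c < τ * (θ * S) = ∑ r, (θ * r) * (τ * μ (φ ⁻¹' {r}))
  have hsum : τ * (θ * S) = ∑ r ∈ φ.range, (θ * r) * (τ * μ (φ ⁻¹' {r})) := by
    rw [hS, Finset.mul_sum, Finset.mul_sum]
    refine Finset.sum_congr rfl fun r _ => by ring
  -- restrict to nonzero terms
  set s : Finset ℝ≥0 := φ.range.filter fun r => r ≠ 0 ∧ μ (φ ⁻¹' {r}) ≠ 0 with hs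
  have hsum2 : c < ∑ r ∈ s, (θ * r) * (τ * μ (φ ⁻¹' {r})) := by
    rw [hsum] at hτ2
    refine hτ2.trans_le (le_of_eq ?_)
    rw [hs]
    refine (Finset.sum_filter_of_ne fun r hr hne => ?_).symm
    constructor
    · rintro rfl; simp at hne
    · rintro h0; rw [h0] at hne; simp at hne
  -- choose compacts
  have hchoice : ∀ r ∈ s, ∃ K, K ⊆ φ ⁻¹' {r} ∧ IsCompact K ∧ τ * μ (φ ⁻¹' {r}) < μ K := by
    intro r hr
    rw [hs, Finset.mem_filter] at hr
    obtain ⟨-, hr0, hrμ⟩ := hr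
    have : τ * μ (φ ⁻¹' {r}) < μ (φ ⁻¹' {r}) := by
      calc τ * μ (φ ⁻¹' {r}) < 1 * μ (φ ⁻¹' {r}) :=
            ENNReal.mul_lt_mul_left hrμ (measure_ne_top μ _) hτ1
        _ = μ (φ ⁻¹' {r}) := one_mul _
    exact hreg.innerRegular (φ.measurableSet_fiber r) _ this
  choose! K hK1 hK2 hK3 using hchoice
  refine ⟨s, K, fun r => θ * r, fun r hr => hK2 r hr, ?_, ?_, ?_⟩
  · intro r hr r' hr' hne
    refine Set.disjoint_left.mpr fun x hx hx' => hne ?_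
    have h1 := hK1 r hr hx
    have h2 := hK1 r' hr' hx'
    simp only [Set.mem_preimage, Set.mem_singleton_iff] at h1 h2
    rw [← h1, ← h2]
  · intro r hr x hx
    have hxr : φ x = r := by
      have := hK1 r hr hx
      simpa using this
    have hr0 : r ≠ 0 := by
      rw [hs, Finset.mem_filter] at hr; exact hr.2.1
    calc θ * (r : ℝ≥0∞) < 1 * r := by
          refine ENNReal.mul_lt_mul_left ?_ ENNReal.coe_ne_top hθ1
          exact_mod_cast hr0
      _ = (r : ℝ≥0∞) := one_mul _
      _ = (φ x : ℝ≥0∞) := by rw [hxr]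
      _ ≤ f x := hφ x
  · refine hsum2.trans_le (Finset.sum_le_sum fun r hr => ?_)
    exact mul_le_mul_right (hK3 r hr).le _


private lemma lemR {X : Type*} [TopologicalSpace X] [MeasurableSpace X]
    (k : X → X → ℝ≥0∞) (hk : LowerSemicontinuous fun p : X × X => k p.1 p.2)
    (μ : Measure X) [IsFiniteMeasure μ] (hreg : μ.InnerRegular)
    (y : X) {c : ℝ≥0∞} (hc : c < ∫⁻ x, k x y ∂μ) :
    ∃ (s : Finset ℝ≥0) (K : ℝ≥0 → Set X) (d : ℝ≥0 → ℝ≥0∞) (V : Set X),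
      IsOpen V ∧ y ∈ V ∧ (∀ r ∈ s, IsCompact (K r)) ∧
      (∀ r ∈ s, ∀ r' ∈ s, r ≠ r' → Disjoint (K r) (K r')) ∧
      (∀ r ∈ s, ∀ x ∈ K r, ∀ y' ∈ V, d r < k x y') ∧
      c < ∑ r ∈ s, d r * μ (K r) := by
  obtain ⟨s, K, d, hKc, hdisj, hlt, hsum⟩ := H1 μ hreg (fun x => k x y) hc
  have htube : ∀ r ∈ s, ∃ (u v : Set X), IsOpen u ∧ IsOpen v ∧ K r ⊆ u ∧ y ∈ v ∧
      ∀ x ∈ u, ∀ y' ∈ v, d r < k x y' := by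
    intro r hr
    have hopen : IsOpen {p : X × X | d r < k p.1 p.2} := by
      have := hk.isOpen_preimage (d r)
      simpa [Set.preimage, Set.Ioi] using this
    have hsub : K r ×ˢ ({y} : Set X) ⊆ {p : X × X | d r < k p.1 p.2} := by
      rintro ⟨x, y'⟩ ⟨hx, hy⟩
      simp only [Set.mem_singleton_iff] at hy
      subst hy
      exact hlt r hr x hx
    obtain ⟨u, v, hu, hv, hKu, hyv, huv⟩ :=
      generalized_tube_lemma (hKc r hr) isCompact_singleton hopen hsub
    exact ⟨u, v, hu, hv, hKu, hyv rfl, fun x hx y' hy' => huv (Set.mk_mem_prod hx hy')⟩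
  choose! u v hu hv hKu hyv huv using htube
  refine ⟨s, K, d, ⋂ r ∈ s, v r, ?_, ?_, hKc, hdisj, ?_, hsum⟩
  · exact isOpen_biInter_finset fun r hr => hv r hr
  · exact Set.mem_iInter₂.mpr fun r hr => hyv r hr
  · intro r hr x hx y' hy'
    exact huv r hr x (hKu r hr hx) y' (Set.mem_iInter₂.mp hy' r hr)


private lemma M1aux {X : Type*} [TopologicalSpace X] [MeasurableSpace X] [BorelSpace X] [T2Space X]
    (k : X → X → ℝ≥0∞) (hk : LowerSemicontinuous fun p : X × X => k p.1 p.2)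
    (μ ν : Measure X) [IsFiniteMeasure μ] [IsFiniteMeasure ν] (hregμ : μ.InnerRegular)
    (L : Set X) (hL : IsCompact L) (e : ℝ≥0∞)
    (hpot : ∀ y ∈ L, e < ∫⁻ x, k x y ∂μ) :
    e * ν L ≤ ∫⁻ p : X × X, L.indicator (fun _ => (1 : ℝ≥0∞)) p.2 * k p.1 p.2 ∂(μ.prod ν) := by
  classical
  have hdata : ∀ y ∈ L, ∃ (s : Finset ℝ≥0) (K : ℝ≥0 → Set X) (d : ℝ≥0 → ℝ≥0∞) (V : Set X),
      IsOpen V ∧ y ∈ V ∧ (∀ r ∈ s, IsCompact (K r)) ∧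
      (∀ r ∈ s, ∀ r' ∈ s, r ≠ r' → Disjoint (K r) (K r')) ∧
      (∀ r ∈ s, ∀ x ∈ K r, ∀ y' ∈ V, d r < k x y') ∧
      e < ∑ r ∈ s, d r * μ (K r) :=
    fun y hy => lemR k hk μ hregμ y (hpot y hy)
  choose! sf Kf df Vf hVo hyV hKc hKd hlt hsum using hdata
  have hcover : L ⊆ ⋃ y : L, Vf ↑y := fun z hz => Set.mem_iUnion.mpr ⟨⟨z, hz⟩, hyV z hz⟩
  obtain ⟨t, ht⟩ := hL.elim_finite_subcover (fun y : L => Vf ↑y)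
    (fun y => hVo ↑y y.2) hcover
  set l := t.toList with hl
  set f : ℕ → Set X := fun n => if h : n < l.length then Vf ↑(l.get ⟨n, h⟩) else ∅ with hf
  set W : ℕ → Set X := fun n => disjointed (fun m => L ∩ f m) n with hW
  have hLclosed : MeasurableSet L := (hL.isClosed).measurableSet
  have hfmeas : ∀ n, MeasurableSet (f n) := by
    intro n
    simp only [hf]
    split
    · next h => exact (hVo _ (l.get ⟨n, h⟩).2).measurableSet
    · exact MeasurableSet.empty
  have hWmeas : ∀ n, MeasurableSet (W n) :=
    fun n => MeasurableSet.disjointed (fun m => hLclosed.inter (hfmeas m)) n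
  have hWdisj : Pairwise (Function.onFun Disjoint W) := disjoint_disjointed _
  have hWsub : ∀ n, W n ⊆ L ∩ f n := fun n => disjointed_subset _ n
  have hWunion : ⋃ n, W n = L := by
    rw [hW]
    rw [iUnion_disjointed, ← Set.inter_iUnion]
    refine Set.inter_eq_left.mpr fun z hz => ?_
    obtain ⟨i, hit, hzv⟩ := Set.mem_iUnion₂.mp (ht hz)
    have : i ∈ l := Finset.mem_toList.mpr hit
    obtain ⟨n, hn⟩ := List.mem_iff_get.mp this
    refine Set.mem_iUnion.mpr ⟨n, ?_⟩
    simp only [hf]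
    rw [dif_pos n.isLt]
    rw [← hn] at hzv
    exact hzv
  -- the auxiliary functions
  set g : ℕ → X × X → ℝ≥0∞ := fun n p =>
    if h : n < l.length then
      ∑ r ∈ sf ↑(l.get ⟨n, h⟩),
        ((Kf ↑(l.get ⟨n, h⟩) r) ×ˢ W n).indicator (fun _ => df ↑(l.get ⟨n, h⟩) r) p
    else 0 with hg
  have hgmeas : ∀ n, Measurable (g n) := by
    intro n
    simp only [hg]
    split
    · next h =>
      refine Finset.measurable_sum _ fun r hr => ?_
      exact measurable_const.indicator
        ((((hKc _ (l.get ⟨n, h⟩).2 r hr).isClosed.measurableSet).prod (hWmeas n)))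
    · exact measurable_const
  have hne_mem : ∀ n p, g n p ≠ 0 → p.2 ∈ W n := by
    intro n p hne
    simp only [hg] at hne
    by_cases h : n < l.length
    · rw [dif_pos h] at hne
      obtain ⟨r, hr, hrne⟩ := Finset.exists_ne_zero_of_sum_ne_zero hne
      by_contra hp2
      have : p ∉ (Kf ↑(l.get ⟨n, h⟩) r) ×ˢ W n := fun hmem => hp2 hmem.2
      rw [Set.indicator_of_notMem this] at hrne
      exact hrne rfl
    · rw [dif_neg h] at hne; exact absurd rfl hne
  have hbound : ∀ n p, g n p ≤ L.indicator (fun _ => (1 : ℝ≥0∞)) p.2 * k p.1 p.2 := by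
    intro n p
    by_cases hne : g n p = 0
    · rw [hne]; exact zero_le
    have hp2W : p.2 ∈ W n := hne_mem n p hne
    have hp2L : p.2 ∈ L := (hWsub n hp2W).1
    rw [Set.indicator_of_mem hp2L, one_mul]
    simp only [hg] at hne ⊢
    by_cases h : n < l.length
    swap
    · rw [dif_neg h]; exact zero_le
    rw [dif_pos h] at hne ⊢
    set y₀ : X := ↑(l.get ⟨n, h⟩) with hy₀
    have hy₀L : y₀ ∈ L := (l.get ⟨n, h⟩).2
    obtain ⟨r₀, hr₀, hr₀ne⟩ := Finset.exists_ne_zero_of_sum_ne_zero hne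
    have hpmem : p ∈ (Kf y₀ r₀) ×ˢ W n := by
      by_contra hmem
      rw [Set.indicator_of_notMem hmem] at hr₀ne
      exact hr₀ne rfl
    have hsingle : ∀ r ∈ sf y₀, r ≠ r₀ →
        ((Kf y₀ r) ×ˢ W n).indicator (fun _ => df y₀ r) p = 0 := by
      intro r hr hrne
      refine Set.indicator_of_notMem (fun hmem => ?_) _
      exact (Set.disjoint_left.mp (hKd y₀ hy₀L r hr r₀ hr₀ hrne) hmem.1) hpmem.1
    rw [Finset.sum_eq_single_of_mem r₀ hr₀ hsingle, Set.indicator_of_mem hpmem]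
    have hp2V : p.2 ∈ Vf y₀ := by
      have h2 := (hWsub n hp2W).2
      simp only [hf] at h2
      rwa [dif_pos h] at h2
    exact (hlt y₀ hy₀L r₀ hr₀ p.1 hpmem.1 p.2 hp2V).le
  have hper : ∀ n, e * ν (W n) ≤ ∫⁻ p, g n p ∂(μ.prod ν) := by
    intro n
    by_cases h : n < l.length
    · set y₀ : X := ↑(l.get ⟨n, h⟩) with hy₀
      have hy₀L : y₀ ∈ L := (l.get ⟨n, h⟩).2
      have : ∫⁻ p, g n p ∂(μ.prod ν)
          = ∑ r ∈ sf y₀, df y₀ r * (μ (Kf y₀ r) * ν (W n)) := by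
        simp only [hg, dif_pos h]
        rw [lintegral_finset_sum _ fun r hr => measurable_const.indicator
          (((hKc y₀ hy₀L r hr).isClosed.measurableSet).prod (hWmeas n))]
        refine Finset.sum_congr rfl fun r hr => ?_
        rw [lintegral_indicator_const
          (((hKc y₀ hy₀L r hr).isClosed.measurableSet).prod (hWmeas n)),
          Measure.prod_prod]
      rw [this]
      calc e * ν (W n) ≤ (∑ r ∈ sf y₀, df y₀ r * μ (Kf y₀ r)) * ν (W n) :=
            mul_le_mul_left (hsum y₀ hy₀L).le _
        _ = ∑ r ∈ sf y₀, df y₀ r * (μ (Kf y₀ r) * ν (W n)) := by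
            rw [Finset.sum_mul]; exact Finset.sum_congr rfl fun r _ => mul_assoc _ _ _
    · have : W n = ∅ := by
        have := hWsub n
        rw [hf] at this
        simp only [dif_neg h, Set.inter_empty] at this
        exact Set.eq_empty_iff_forall_notMem.mpr fun x hx => this hx
      rw [this]
      simp
  calc e * ν L = e * ∑' n, ν (W n) := by rw [← hWunion, measure_iUnion hWdisj hWmeas]
    _ = ∑' n, e * ν (W n) := ENNReal.tsum_mul_left.symm
    _ ≤ ∑' n, ∫⁻ p, g n p ∂(μ.prod ν) := ENNReal.tsum_le_tsum hper
    _ = ∫⁻ p, ∑' n, g n p ∂(μ.prod ν) :=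
        (lintegral_tsum fun n => (hgmeas n).aemeasurable).symm
    _ ≤ ∫⁻ p : X × X, L.indicator (fun _ => (1 : ℝ≥0∞)) p.2 * k p.1 p.2 ∂(μ.prod ν) := by
        refine lintegral_mono fun p => ?_
        by_cases hall : ∀ n, g n p = 0
        · simp [hall]
        push_neg at hall
        obtain ⟨n₀, hn₀⟩ := hall
        have hothers : ∀ n, n ≠ n₀ → g n p = 0 := by
          intro n hn
          by_contra hne
          exact (hWdisj hn).le_bot ⟨hne_mem n p hne, hne_mem n₀ p hn₀⟩
        rw [tsum_eq_single n₀ hothers]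
        exact hbound n₀ p


private lemma finset_sum_lintegral_le {X ι : Type*} [MeasurableSpace X] (μ : Measure X)
    (s : Finset ι) (h : ι → X → ℝ≥0∞) :
    ∑ i ∈ s, ∫⁻ a, h i a ∂μ ≤ ∫⁻ a, ∑ i ∈ s, h i a ∂μ := by
  classical
  induction s using Finset.cons_induction with
  | empty => simp
  | cons i s hi ih =>
    simp only [Finset.sum_cons]
    calc ∫⁻ a, h i a ∂μ + ∑ j ∈ s, ∫⁻ a, h j a ∂μ
        ≤ ∫⁻ a, h i a ∂μ + ∫⁻ a, ∑ j ∈ s, h j a ∂μ := add_le_add le_rfl ih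
      _ ≤ ∫⁻ a, h i a + ∑ j ∈ s, h j a ∂μ := le_lintegral_add _ _

lemma sum_indicator_le_one {X ι : Type*} (s : Finset ι) (L : ι → Set X)
    (hdisj : ∀ r ∈ s, ∀ r' ∈ s, r ≠ r' → Disjoint (L r) (L r')) (y : X) :
    ∑ r ∈ s, (L r).indicator (fun _ => (1 : ℝ≥0∞)) y ≤ 1 := by
  classical
  by_cases hex : ∃ r ∈ s, y ∈ L r
  · obtain ⟨r₀, hr₀, hy₀⟩ := hex
    rw [Finset.sum_eq_single_of_mem r₀ hr₀ (fun r hr hne =>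
      Set.indicator_of_notMem (fun hy => Set.disjoint_left.mp
        (hdisj r hr r₀ hr₀ hne) hy hy₀) _)]
    rw [Set.indicator_of_mem hy₀]
  · push_neg at hex
    rw [Finset.sum_eq_zero fun r hr => Set.indicator_of_notMem (hex r hr) _]
    exact zero_le_one

/-- iterated integral (inner wrt μ) is at most the energy, for inner regular finite measures. -/
lemma iter_le_energy {X : Type*} [TopologicalSpace X] [MeasurableSpace X] [BorelSpace X]
    [T2Space X]
    (k : X → X → ℝ≥0∞) (hk : LowerSemicontinuous fun p : X × X => k p.1 p.2)
    (μ ν : Measure X) [IsFiniteMeasure μ] [IsFiniteMeasure ν]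
    (hregμ : μ.InnerRegular) (hregν : ν.InnerRegular) :
    ∫⁻ y, ∫⁻ x, k x y ∂μ ∂ν ≤ ∫⁻ p : X × X, k p.1 p.2 ∂(μ.prod ν) := by
  refine le_of_forall_lt fun c hc => ?_
  obtain ⟨s, Lset, e, hLc, hLd, hLlt, hLsum⟩ := H1 ν hregν (fun y => ∫⁻ x, k x y ∂μ) hc
  refine hLsum.trans_le ?_
  calc ∑ r ∈ s, e r * ν (Lset r)
      ≤ ∑ r ∈ s, ∫⁻ p : X × X,
          (Lset r).indicator (fun _ => (1 : ℝ≥0∞)) p.2 * k p.1 p.2 ∂(μ.prod ν) :=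
        Finset.sum_le_sum fun r hr =>
          M1aux k hk μ ν hregμ (Lset r) (hLc r hr) (e r) (fun y hy => hLlt r hr y hy)
    _ ≤ ∫⁻ p : X × X, ∑ r ∈ s,
          (Lset r).indicator (fun _ => (1 : ℝ≥0∞)) p.2 * k p.1 p.2 ∂(μ.prod ν) :=
        finset_sum_lintegral_le _ _ _
    _ ≤ ∫⁻ p : X × X, k p.1 p.2 ∂(μ.prod ν) := by
        refine lintegral_mono fun p => ?_
        rw [← Finset.sum_mul]
        calc (∑ r ∈ s, (Lset r).indicator (fun _ => (1 : ℝ≥0∞)) p.2) * k p.1 p.2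
            ≤ 1 * k p.1 p.2 := mul_le_mul_left (sum_indicator_le_one s Lset hLd p.2) _
          _ = k p.1 p.2 := one_mul _

lemma energy_le_iter_snd {X : Type*} [MeasurableSpace X]
    (k : X → X → ℝ≥0∞) (μ ν : Measure X) [SFinite μ] [SFinite ν] :
    ∫⁻ p : X × X, k p.1 p.2 ∂(μ.prod ν) ≤ ∫⁻ y, ∫⁻ x, k x y ∂μ ∂ν := by
  rw [lintegral_def]
  refine iSup₂_le fun g hg => ?_
  rw [← SimpleFunc.lintegral_eq_lintegral, lintegral_prod_symm' _ g.measurable]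
  exact lintegral_mono fun y => lintegral_mono fun x => hg (x, y)

lemma energy_le_iter_fst {X : Type*} [MeasurableSpace X]
    (k : X → X → ℝ≥0∞) (μ ν : Measure X) [SFinite μ] [SFinite ν] :
    ∫⁻ p : X × X, k p.1 p.2 ∂(μ.prod ν) ≤ ∫⁻ x, ∫⁻ y, k x y ∂ν ∂μ := by
  rw [lintegral_def]
  refine iSup₂_le fun g hg => ?_
  rw [← SimpleFunc.lintegral_eq_lintegral, lintegral_prod _ g.measurable.aemeasurable]
  exact lintegral_mono fun x => lintegral_mono fun y => hg (x, y)

end AuxStatement3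

/-- Lemma 2: under the comparison hypotheses on the potentials,
`q̲(R(H), S̃(L)) ≤ q(R̃(L), S(H))`. -/
theorem statement3 {X : Type*} [TopologicalSpace X] [MeasurableSpace X] [BorelSpace X]
    [LocallyCompactSpace X] [T2Space X]
    (k : X → X → ℝ≥0∞) (hk : LowerSemicontinuous fun p : X × X => k p.1 p.2)
    (hsym : ∀ x y, k x y = k y x)
    (H L : Set X)
    (RH SH RL SL : Set (Measure X))
    (hRH : RH ⊆ MM H) (hSH : SH ⊆ MM H) (hRL : RL ⊆ MM L) (hSL : SL ⊆ MM L)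
    (h1 : ∀ μ ∈ MM H, (⨅ ν ∈ SL, ∫⁻ y, pot k μ y ∂ν) ≤ ⨅ ν ∈ RL, ∫⁻ y, pot k μ y ∂ν)
    (h2 : ∀ μ ∈ MM L, (⨆ ν ∈ RH, ∫⁻ y, pot k μ y ∂ν) ≤ ⨆ ν ∈ SH, ∫⁻ y, pot k μ y ∂ν) :
    qlow k RH SL ≤ qup k RL SH := by
  simp only [qlow, qup, energy, pot] at h1 h2 ⊢
  refine iSup₂_le fun μ hμ => le_iInf₂ fun σ hσ => ?_
  obtain ⟨hμfin, -, hμreg, -⟩ := hRH hμ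
  obtain ⟨hσfin, -, hσreg, -⟩ := hRL hσ
  haveI := hμfin; haveI := hσfin
  calc (⨅ ν ∈ SL, ∫⁻ p : X × X, k p.1 p.2 ∂(μ.prod ν))
      ≤ ⨅ ν ∈ SL, ∫⁻ y, ∫⁻ x, k x y ∂μ ∂ν := by
        refine iInf₂_mono fun ν hν => ?_
        obtain ⟨hνfin, -, -, -⟩ := hSL hν
        haveI := hνfin
        exact energy_le_iter_snd k μ ν
    _ ≤ ⨅ ν ∈ RL, ∫⁻ y, ∫⁻ x, k x y ∂μ ∂ν := h1 μ (hRH hμ)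
    _ ≤ ∫⁻ y, ∫⁻ x, k x y ∂μ ∂σ := iInf₂_le σ hσ
    _ ≤ ∫⁻ p : X × X, k p.1 p.2 ∂(μ.prod σ) := iter_le_energy k hk μ σ hμreg hσreg
    _ ≤ ∫⁻ x, ∫⁻ y, k x y ∂σ ∂μ := energy_le_iter_fst k μ σ
    _ = ∫⁻ x, ∫⁻ y, k y x ∂σ ∂μ :=
        lintegral_congr fun x => lintegral_congr fun y => hsym x y
    _ ≤ ⨆ ν ∈ RH, ∫⁻ x, ∫⁻ y, k y x ∂σ ∂ν :=
        le_iSup₂ (f := fun (ν : Measure X) (_ : ν ∈ RH) => ∫⁻ x, ∫⁻ y, k y x ∂σ ∂ν) μ hμ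
    _ ≤ ⨆ ν ∈ SH, ∫⁻ x, ∫⁻ y, k y x ∂σ ∂ν := h2 σ (hRL hσ)
    _ ≤ ⨆ τ ∈ SH, ∫⁻ p : X × X, k p.1 p.2 ∂(σ.prod τ) := by
        refine iSup₂_mono fun τ hτ => ?_
        obtain ⟨hτfin, -, hτreg, -⟩ := hSH hτ
        haveI := hτfin
        exact iter_le_energy k hk σ τ hσreg hτreg

end
end

section
/- Let H ⊆ X and L ⊆ Y be arbitrary, and k a positive lower semicontinuous symmetric kernel. Suppose that for every μ ∈ R(H) and every ε > 0 there is a compact set K(ε) ⊆ H and a measure μ_{K(ε)} ∈ R(K(ε)) such that μ_{K(ε)} ≤ (1+ε) μ|_{K(ε)}. Then q(R(H), S(L)) = inf over compact K ⊆ H of q(R(K), S(L)). -/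
open MeasureTheory Topology Filter ENNReal

noncomputable section

/-- Lemma 4: if every `μ ∈ R(H)` can be `(1+ε)`-approximated by a member of
the family concentrated on a compact subset of `H`, then
`q(R(H), S(L)) = inf_{K ⊂⊂ H} q(R(K), S(L))`. -/
theorem statement7 {X : Type*} [TopologicalSpace X] [MeasurableSpace X] [BorelSpace X]
    [LocallyCompactSpace X] [T2Space X]
    (k : X → X → ℝ≥0∞) (hk : LowerSemicontinuous fun p : X × X => k p.1 p.2)
    (hsym : ∀ x y, k x y = k y x)
    (H L : Set X)
    (R S : Set (Measure X)) (hR : R ⊆ MM H) (hS : S ⊆ MM L)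
    (hyp : ∀ μ ∈ R, ∀ ε : ℝ≥0∞, 0 < ε → ∃ K : Set X, IsCompact K ∧ K ⊆ H ∧
      ∃ μ' ∈ R, Concentrated μ' K ∧ μ' ≤ (1 + ε) • μ.restrict K) :
    qup k R S = ⨅ (K : Set X) (_ : IsCompact K) (_ : K ⊆ H),
      qup k {μ ∈ R | Concentrated μ K} S := by
  -- key comparison: if μ' ≤ c • μ.restrict K then E(μ',ν) ≤ c E(μ,ν)
  have key : ∀ μ' μ : Measure X, ∀ ν ∈ S, ∀ c : ℝ≥0∞, ∀ K : Set X,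
      μ' ≤ c • μ.restrict K → energy k μ' ν ≤ c * energy k μ ν := by
    intro μ' μ ν hν c K hle
    haveI : IsFiniteMeasure ν := (hS hν).1
    have hle2 : μ' ≤ c • μ := by
      refine hle.trans (Measure.le_intro fun s hs _ => ?_)
      simp only [Measure.smul_apply, smul_eq_mul]
      exact mul_le_mul_right (Measure.le_iff'.mp Measure.restrict_le_self s) c
    have hprod : μ'.prod ν ≤ c • (μ.prod ν) := by
      refine Measure.le_intro fun s hs _ => ?_
      rw [Measure.prod_apply hs, Measure.smul_apply, Measure.prod_apply hs,
        ← lintegral_smul_measure]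
      exact lintegral_mono' hle2 le_rfl
    calc energy k μ' ν ≤ ∫⁻ p : X × X, k p.1 p.2 ∂(c • (μ.prod ν)) :=
          lintegral_mono' hprod le_rfl
      _ = c * energy k μ ν := lintegral_smul_measure _ _
  apply le_antisymm
  · exact le_iInf fun K => le_iInf fun _ => le_iInf fun _ =>
      iInf_le_iInf_of_subset fun μ hμ => hμ.1
  · rw [qup]
    refine le_iInf₂ fun μ hμ => ?_
    set L0 : ℝ≥0∞ := ⨆ ν ∈ S, energy k μ ν with hL0
    rcases eq_or_ne L0 ⊤ with htop | htop
    · rw [htop]; exact le_top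
    refine ENNReal.le_of_forall_pos_le_add fun δ hδ hlt => ?_
    -- choose ε with 0 < ε and ε * L0 ≤ δ
    set ε : ℝ≥0∞ := if L0 = 0 then 1 else (δ : ℝ≥0∞) / L0 with hε
    have hεpos : 0 < ε := by
      rcases eq_or_ne L0 0 with h0 | h0
      · simp [hε, h0]
      · have : (δ : ℝ≥0∞) / L0 ≠ 0 := by
          simp [ENNReal.div_eq_zero_iff, htop, ENNReal.coe_ne_zero, hδ.ne']
        simp only [hε, if_neg h0]
        exact pos_iff_ne_zero.mpr this
    have hεL0 : ε * L0 ≤ δ := by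
      rcases eq_or_ne L0 0 with h0 | h0
      · simp [h0]
      · simp only [hε, if_neg h0]
        rw [ENNReal.div_mul_cancel h0 htop]
    obtain ⟨K, hK, hKH, μ', hμ'R, hconc, hle⟩ := hyp μ hμ ε hεpos
    have h1 : (⨅ (K : Set X) (_ : IsCompact K) (_ : K ⊆ H),
        qup k {μ ∈ R | Concentrated μ K} S) ≤ ⨆ ν ∈ S, energy k μ' ν := by
      refine iInf_le_of_le K (iInf_le_of_le hK (iInf_le_of_le hKH ?_))
      exact iInf₂_le μ' ⟨hμ'R, hconc⟩
    refine h1.trans ?_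
    refine iSup₂_le fun ν hν => ?_
    have h2 : energy k μ' ν ≤ (1 + ε) * energy k μ ν := key μ' μ ν hν (1 + ε) K hle
    have h3 : energy k μ ν ≤ L0 := le_iSup₂ (f := fun ν _ => energy k μ ν) ν hν
    calc energy k μ' ν ≤ (1 + ε) * L0 := h2.trans (mul_le_mul_right h3 _)
      _ = L0 + ε * L0 := by ring
      _ ≤ L0 + δ := add_le_add_right hεL0 _

end
end

section
/- Let H ⊆ X be arbitrary and let S(L) ⊆ M(L) be compact in the vague topology. Suppose that for every measure μ ∈ R(H) there is a net of measures {μ_K}, indexed by a directed subfamily of the compact subsets of H, with μ_K ∈ R(K) for each index K, converging to μ in the vague topology. Then q̲(R(H), S(L)) = sup over compact K ⊆ H of q̲(R(K), S(L)). -/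
open MeasureTheory Topology Filter ENNReal

noncomputable section

set_option linter.unusedSectionVars false
set_option linter.unusedVariables false

noncomputable def predIn (T : Finset ℝ≥0∞) (c : ℝ≥0∞) : ℝ≥0∞ :=
  (T.filter (· < c)).sup id

lemma predIn_lt {T : Finset ℝ≥0∞} {c : ℝ≥0∞} (hc : c ≠ 0) : predIn T c < c ∨ predIn T c = 0 := by
  rcases (T.filter (· < c)).eq_empty_or_nonempty with h | h
  · right; simp [predIn, h]
  · left
    obtain ⟨b, hb, hbe⟩ := Finset.exists_mem_eq_sup _ h id
    rw [predIn, hbe]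
    exact (Finset.mem_filter.1 hb).2

lemma telescope_aux (T : Finset ℝ≥0∞) (htop : ⊤ ∉ T) :
    ∀ n, ∀ a ∈ T, (T.filter (· ≤ a)).card ≤ n →
      ∑ c ∈ T.filter (· ≤ a), (c - predIn T c) = a := by
  intro n
  induction n with
  | zero =>
    intro a ha hcard
    have haF : a ∈ T.filter (· ≤ a) := Finset.mem_filter.2 ⟨ha, le_rfl⟩
    rw [Finset.card_eq_zero.1 (Nat.le_zero.1 hcard)] at haF
    simp at haF
  | succ n ih =>
    intro a ha hcard
    have haF : a ∈ T.filter (· ≤ a) := Finset.mem_filter.2 ⟨ha, le_rfl⟩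
    rcases (T.filter (· < a)).eq_empty_or_nonempty with hemp | hne
    · have : T.filter (· ≤ a) = {a} := by
        apply Finset.eq_singleton_iff_unique_mem.2
        refine ⟨haF, fun c hc => ?_⟩
        rcases lt_or_eq_of_le (Finset.mem_filter.1 hc).2 with h | h
        · have : c ∈ T.filter (· < a) := Finset.mem_filter.2 ⟨(Finset.mem_filter.1 hc).1, h⟩
          rw [hemp] at this
          simp at this
        · exact h
      rw [this, Finset.sum_singleton, predIn, hemp]
      simp
    · obtain ⟨b, hbmem, hbe⟩ := Finset.exists_mem_eq_sup _ hne id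
      have hbT : b ∈ T := (Finset.mem_filter.1 hbmem).1
      have hba : b < a := (Finset.mem_filter.1 hbmem).2
      have hpred : predIn T a = b := by simpa [predIn] using hbe
      have herase : (T.filter (· ≤ a)).erase a = T.filter (· ≤ b) := by
        ext c
        simp only [Finset.mem_erase, Finset.mem_filter]
        constructor
        · rintro ⟨hca, hcT, hle⟩
          refine ⟨hcT, ?_⟩
          have : c < a := lt_of_le_of_ne hle hca
          have : c ∈ T.filter (· < a) := Finset.mem_filter.2 ⟨hcT, this⟩
          simpa [hbe] using Finset.le_sup (f := id) this
        · rintro ⟨hcT, hcb⟩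
          exact ⟨(hcb.trans_lt hba).ne, hcT, (hcb.trans hba.le)⟩
      have hsum : ∑ c ∈ T.filter (· ≤ a), (c - predIn T c) =
          (a - predIn T a) + ∑ c ∈ (T.filter (· ≤ a)).erase a, (c - predIn T c) :=
        (Finset.add_sum_erase _ _ haF).symm
      have hcard' : (T.filter (· ≤ b)).card ≤ n := by
        have h1 : (T.filter (· ≤ b)).card < (T.filter (· ≤ a)).card := by
          rw [← herase]
          exact Finset.card_erase_lt_of_mem haF
        omega
      rw [hsum, herase, ih b hbT hcard', hpred]
      exact tsub_add_cancel_of_le hba.le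

lemma telescope (T : Finset ℝ≥0∞) (htop : ⊤ ∉ T) (a : ℝ≥0∞) (ha : a ∈ T) :
    ∑ c ∈ T.filter (· ≤ a), (c - predIn T c) = a :=
  telescope_aux T htop _ a ha le_rfl

section Aux
variable {X Y : Type*} [TopologicalSpace X] [MeasurableSpace X] [BorelSpace X]
  [LocallyCompactSpace X] [T2Space X]
  [TopologicalSpace Y] [MeasurableSpace Y] [BorelSpace Y]
  [LocallyCompactSpace Y] [T2Space Y]


lemma prod_inner_regular (μ : Measure X) (ν : Measure Y) [IsFiniteMeasure μ] [IsFiniteMeasure ν]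
    [μ.Regular] [μ.InnerRegular] [ν.Regular] [ν.InnerRegular] :
    ∀ A : Set (X × Y), MeasurableSet A → ∀ ε : ℝ≥0∞, ε ≠ 0 →
      (∃ F : Set (X × Y), IsCompact F ∧ MeasurableSet F ∧ F ⊆ A ∧
        (μ.prod ν) A ≤ (μ.prod ν) F + ε) ∧
      (∃ G : Set (X × Y), IsOpen G ∧ MeasurableSet G ∧ A ⊆ G ∧
        (μ.prod ν) G ≤ (μ.prod ν) A + ε) := by
  set ρ := μ.prod ν with hρ
  set C : ℝ≥0∞ := μ Set.univ + ν Set.univ + 1 with hCdef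
  have hC0 : C ≠ 0 := by simp [hCdef]
  have hCtop : C ≠ ⊤ := by
    simp only [hCdef]
    exact ENNReal.add_ne_top.2 ⟨ENNReal.add_ne_top.2 ⟨measure_ne_top μ _, measure_ne_top ν _⟩,
      one_ne_top⟩
  have epsdiv : ∀ ε : ℝ≥0∞, ε ≠ 0 → ∃ ε₁ : ℝ≥0∞, ε₁ ≠ 0 ∧ ε₁ ≤ 1 ∧ ε₁ * C ≤ ε := by
    intro ε hε
    refine ⟨min 1 (ε / C), ?_, min_le_left _ _, ?_⟩
    · simp only [ne_eq, min_eq_iff, not_or]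
      constructor
      · rintro ⟨h, -⟩; exact one_ne_zero h
      · rintro ⟨h, -⟩; exact hε (by simpa [ENNReal.div_eq_zero_iff, hCtop] using h)
    · calc min 1 (ε / C) * C ≤ (ε / C) * C := mul_le_mul_left (min_le_right _ _) _
      _ = ε := ENNReal.div_mul_cancel hC0 hCtop
  have main := MeasurableSpace.induction_on_inter
    (C := fun A _ => ∀ ε : ℝ≥0∞, ε ≠ 0 →
      (∃ F : Set (X × Y), IsCompact F ∧ MeasurableSet F ∧ F ⊆ A ∧ ρ A ≤ ρ F + ε) ∧
      (∃ G : Set (X × Y), IsOpen G ∧ MeasurableSet G ∧ A ⊆ G ∧ ρ G ≤ ρ A + ε))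
    generateFrom_prod.symm isPiSystem_prod ?empty ?basic ?compl ?iUnion
  · exact fun A hA => main A hA
  case empty =>
    intro ε hε
    exact ⟨⟨∅, isCompact_empty, MeasurableSet.empty, le_rfl, by simp⟩,
      ⟨∅, isOpen_empty, MeasurableSet.empty, le_rfl, by simp⟩⟩
  case basic =>
    rintro t ht
    obtain ⟨S, hS, T, hT, rfl⟩ := ht
    simp only [Set.mem_setOf_eq] at hS hT
    intro ε hε
    obtain ⟨ε₁, hε₁0, hε₁1, hε₁C⟩ := epsdiv ε hε
    have harith : ∀ a b a' b' : ℝ≥0∞, a' ≤ μ Set.univ → b' ≤ ν Set.univ →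
        a ≤ a' + ε₁ → b ≤ b' + ε₁ → a * b ≤ a' * b' + ε := by
      intro a b a' b' hau hbu ha hb
      calc a * b ≤ (a' + ε₁) * (b' + ε₁) := mul_le_mul' ha hb
      _ = a' * b' + (a' * ε₁ + ε₁ * b' + ε₁ * ε₁) := by ring
      _ ≤ a' * b' + ε := by
          gcongr
          calc a' * ε₁ + ε₁ * b' + ε₁ * ε₁
              ≤ μ Set.univ * ε₁ + ε₁ * ν Set.univ + ε₁ * 1 := by gcongr
          _ = ε₁ * C := by rw [hCdef]; ring
          _ ≤ ε := hε₁C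
    constructor
    · obtain ⟨K, hKS, hKc, hK⟩ := hS.exists_isCompact_lt_add (measure_ne_top μ S) hε₁0
      obtain ⟨L, hLT, hLc, hL⟩ := hT.exists_isCompact_lt_add (measure_ne_top ν T) hε₁0
      refine ⟨K ×ˢ L, hKc.prod hLc,
        (hKc.isClosed.measurableSet).prod (hLc.isClosed.measurableSet),
        Set.prod_mono hKS hLT, ?_⟩
      rw [hρ, Measure.prod_prod, Measure.prod_prod]
      exact harith _ _ _ _ (measure_mono (Set.subset_univ _))
        (measure_mono (Set.subset_univ _)) hK.le hL.le
    · obtain ⟨U, hSU, hUo, hU⟩ := Set.exists_isOpen_lt_add S (measure_ne_top μ S) hε₁0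
      obtain ⟨V, hTV, hVo, hV⟩ := Set.exists_isOpen_lt_add T (measure_ne_top ν T) hε₁0
      refine ⟨U ×ˢ V, hUo.prod hVo, hUo.measurableSet.prod hVo.measurableSet,
        Set.prod_mono hSU hTV, ?_⟩
      rw [hρ, Measure.prod_prod, Measure.prod_prod]
      exact harith _ _ _ _ (measure_mono (Set.subset_univ _))
        (measure_mono (Set.subset_univ _)) hU.le hV.le
  case compl =>
    intro t htm iht ε hε
    constructor
    · obtain ⟨ε₁, hε₁0, hε₁1, hε₁C⟩ := epsdiv ε hε
      obtain ⟨-, G, hGo, hGm, htG, hGle⟩ := iht ε₁ hε₁0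
      obtain ⟨Kx, hKxu, hKxc, hKx⟩ :=
        MeasurableSet.univ.exists_isCompact_lt_add (μ := μ) (measure_ne_top μ _) hε₁0
      obtain ⟨Ky, hKyu, hKyc, hKy⟩ :=
        MeasurableSet.univ.exists_isCompact_lt_add (μ := ν) (measure_ne_top ν _) hε₁0
      refine ⟨Gᶜ ∩ (Kx ×ˢ Ky), (hKxc.prod hKyc).inter_left hGo.isClosed_compl,
        (hGm.compl).inter ((hKxc.isClosed.measurableSet).prod (hKyc.isClosed.measurableSet)),
        (Set.inter_subset_left).trans (Set.compl_subset_compl.2 htG), ?_⟩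
      have hsplit : tᶜ ⊆ (Gᶜ ∩ (Kx ×ˢ Ky)) ∪ ((G \ t) ∪ (Kxᶜ ×ˢ (Set.univ : Set Y))
          ∪ ((Set.univ : Set X) ×ˢ Kyᶜ)) := by
        intro p hp
        by_cases hpG : p ∈ G
        · exact Or.inr (Or.inl (Or.inl ⟨hpG, hp⟩))
        · by_cases hx : p.1 ∈ Kx
          · by_cases hy : p.2 ∈ Ky
            · exact Or.inl ⟨hpG, hx, hy⟩
            · exact Or.inr (Or.inr ⟨trivial, hy⟩)
          · exact Or.inr (Or.inl (Or.inr ⟨hx, trivial⟩))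
      calc ρ tᶜ ≤ ρ (Gᶜ ∩ (Kx ×ˢ Ky)) + (ρ (G \ t) + ρ (Kxᶜ ×ˢ (Set.univ : Set Y))
            + ρ ((Set.univ : Set X) ×ˢ Kyᶜ)) := by
            refine (measure_mono hsplit).trans ?_
            refine (measure_union_le _ _).trans ?_
            gcongr
            exact (measure_union_le _ _).trans (by gcongr; exact measure_union_le _ _)
      _ ≤ ρ (Gᶜ ∩ (Kx ×ˢ Ky)) + ε := by
            gcongr
            have h1 : ρ (G \ t) ≤ ε₁ := by
              rw [measure_diff htG htm.nullMeasurableSet (measure_ne_top ρ t)]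
              exact tsub_le_iff_right.2 (by rwa [add_comm])
            have hKx' : μ Kxᶜ ≤ ε₁ := by
              rw [measure_compl hKxc.isClosed.measurableSet (measure_ne_top μ _)]
              exact tsub_le_iff_right.2 (by rw [add_comm]; exact hKx.le)
            have h2 : ρ (Kxᶜ ×ˢ (Set.univ : Set Y)) ≤ ε₁ * ν Set.univ := by
              rw [hρ, Measure.prod_prod]
              exact mul_le_mul_left hKx' _
            have hKy' : ν Kyᶜ ≤ ε₁ := by
              rw [measure_compl hKyc.isClosed.measurableSet (measure_ne_top ν _)]
              exact tsub_le_iff_right.2 (by rw [add_comm]; exact hKy.le)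
            have h3 : ρ ((Set.univ : Set X) ×ˢ Kyᶜ) ≤ μ Set.univ * ε₁ := by
              rw [hρ, Measure.prod_prod]
              exact mul_le_mul_right hKy' _
            calc ρ (G \ t) + ρ (Kxᶜ ×ˢ (Set.univ : Set Y)) + ρ ((Set.univ : Set X) ×ˢ Kyᶜ)
                ≤ ε₁ + ε₁ * ν Set.univ + μ Set.univ * ε₁ := by gcongr
            _ = ε₁ * 1 + ε₁ * ν Set.univ + μ Set.univ * ε₁ := by rw [mul_one]
            _ = ε₁ * C := by rw [hCdef]; ring
            _ ≤ ε := hε₁C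
    · obtain ⟨⟨F, hFc, hFm, hFt, hFle⟩, -⟩ := iht ε hε
      refine ⟨Fᶜ, hFc.isClosed.isOpen_compl, hFm.compl, Set.compl_subset_compl.2 hFt, ?_⟩
      have hsub : Fᶜ ⊆ tᶜ ∪ (t \ F) := by
        intro p hp
        by_cases hpt : p ∈ t
        · exact Or.inr ⟨hpt, hp⟩
        · exact Or.inl hpt
      calc ρ Fᶜ ≤ ρ tᶜ + ρ (t \ F) := (measure_mono hsub).trans (measure_union_le _ _)
      _ ≤ ρ tᶜ + ε := by
          gcongr
          rw [measure_diff hFt hFm.nullMeasurableSet (measure_ne_top ρ F)]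
          exact tsub_le_iff_right.2 (by rwa [add_comm])
  case iUnion =>
    intro f hdisj hfm ihf ε hε
    have hε2 : ε / 2 ≠ 0 := by simp [hε]
    have hε4 : ε / 4 ≠ 0 := by simp [hε]
    constructor
    · -- inner
      set δ : ℕ → ℝ≥0∞ := fun n => (ε / 4) * 2⁻¹ ^ n with hδdef
      have hδ0 : ∀ n, δ n ≠ 0 := by
        intro n
        simp only [hδdef, ne_eq, mul_eq_zero, not_or]
        exact ⟨hε4, by simp⟩
      have hδsum : ∑' n, δ n ≤ ε / 2 := by
        rw [hδdef]
        rw [ENNReal.tsum_mul_left, ENNReal.tsum_geometric, ENNReal.one_sub_inv_two, inv_inv]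
        rw [ENNReal.div_eq_inv_mul, ENNReal.div_eq_inv_mul]
        rw [mul_comm (4 : ℝ≥0∞)⁻¹ ε, mul_assoc]
        rw [show ((4 : ℝ≥0∞))⁻¹ * 2 = 2⁻¹ by
          rw [show (4 : ℝ≥0∞) = 2 * 2 by norm_num, ENNReal.mul_inv (by norm_num) (by norm_num),
            mul_assoc, ENNReal.inv_mul_cancel (by norm_num) (by norm_num), mul_one]]
        rw [mul_comm]
      have hsum : ρ (⋃ n, f n) = ∑' n, ρ (f n) := measure_iUnion hdisj hfm
      obtain ⟨J, hJ⟩ : ∃ J : Finset ℕ, ρ (⋃ n, f n) ≤ ∑ n ∈ J, ρ (f n) + ε / 2 := by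
        rcases eq_or_ne (ρ (⋃ n, f n)) 0 with h0 | h0
        · exact ⟨∅, by simp [h0]⟩
        · have hne : ρ (⋃ n, f n) - ε / 2 < ⨆ J : Finset ℕ, ∑ n ∈ J, ρ (f n) := by
            rw [← ENNReal.tsum_eq_iSup_sum, ← hsum]
            exact ENNReal.sub_lt_self (measure_ne_top ρ _) h0 hε2
          obtain ⟨J, hJ⟩ := lt_iSup_iff.1 hne
          exact ⟨J, tsub_le_iff_right.1 hJ.le⟩
      choose F hFc hFm hFsub hFle using fun n => ((ihf n) (δ n) (hδ0 n)).1
      refine ⟨⋃ n ∈ J, F n, (J.finite_toSet).isCompact_biUnion (fun n _ => hFc n),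
        MeasurableSet.biUnion (J.countable_toSet) (fun n _ => hFm n),
        Set.iUnion₂_subset fun n _ => (hFsub n).trans (Set.subset_iUnion f n), ?_⟩
      have hdisjF : (J : Set ℕ).PairwiseDisjoint F := fun i _ j _ hij =>
        (hdisj hij).mono (hFsub i) (hFsub j)
      have hFeq : ρ (⋃ n ∈ J, F n) = ∑ n ∈ J, ρ (F n) :=
        measure_biUnion_finset hdisjF (fun n _ => hFm n)
      calc ρ (⋃ n, f n) ≤ ∑ n ∈ J, ρ (f n) + ε / 2 := hJ
      _ ≤ ∑ n ∈ J, (ρ (F n) + δ n) + ε / 2 := by gcongr with n hn; exact hFle n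
      _ = ∑ n ∈ J, ρ (F n) + ∑ n ∈ J, δ n + ε / 2 := by rw [Finset.sum_add_distrib]
      _ ≤ ρ (⋃ n ∈ J, F n) + ε / 2 + ε / 2 := by
          rw [hFeq]
          gcongr
          exact (ENNReal.sum_le_tsum J).trans hδsum
      _ = ρ (⋃ n ∈ J, F n) + ε := by rw [add_assoc, ENNReal.add_halves]
    · -- outer
      set δ : ℕ → ℝ≥0∞ := fun n => (ε / 2) * 2⁻¹ ^ n with hδdef
      have hδ0 : ∀ n, δ n ≠ 0 := by
        intro n
        simp only [hδdef, ne_eq, mul_eq_zero, not_or]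
        exact ⟨hε2, by simp⟩
      have hδsum : ∑' n, δ n ≤ ε := by
        rw [hδdef, ENNReal.tsum_mul_left, ENNReal.tsum_geometric, ENNReal.one_sub_inv_two, inv_inv]
        rw [ENNReal.div_eq_inv_mul, mul_comm (2 : ℝ≥0∞)⁻¹ ε, mul_assoc,
          ENNReal.inv_mul_cancel (by norm_num) (by norm_num), mul_one]
      choose G hGo hGm hfG hGle using fun n => ((ihf n) (δ n) (hδ0 n)).2
      refine ⟨⋃ n, G n, isOpen_iUnion hGo, MeasurableSet.iUnion hGm,
        Set.iUnion_mono hfG, ?_⟩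
      have hsub : (⋃ n, G n) ⊆ (⋃ n, f n) ∪ ⋃ n, (G n \ f n) := by
        intro p hp
        obtain ⟨n, hn⟩ := Set.mem_iUnion.1 hp
        by_cases hpf : p ∈ ⋃ n, f n
        · exact Or.inl hpf
        · exact Or.inr (Set.mem_iUnion.2 ⟨n, hn, fun h => hpf (Set.mem_iUnion.2 ⟨n, h⟩)⟩)
      calc ρ (⋃ n, G n) ≤ ρ (⋃ n, f n) + ρ (⋃ n, (G n \ f n)) :=
            (measure_mono hsub).trans (measure_union_le _ _)
      _ ≤ ρ (⋃ n, f n) + ε := by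
          gcongr
          refine (measure_iUnion_le _).trans ?_
          refine le_trans ?_ hδsum
          refine ENNReal.tsum_le_tsum fun n => ?_
          rw [measure_diff (hfG n) (hfm n).nullMeasurableSet (measure_ne_top ρ _)]
          exact tsub_le_iff_right.2 (by rw [add_comm]; exact hGle n)


/-- For a compact `F` inside an open `U ⊆ X × Y`, there is a finite family of pairs of
nonnegative compactly supported continuous functions whose sum of products is a
"bump": between the indicator of `F` and that of `U`. -/
lemma psi_exists {F U : Set (X × Y)} (hF : IsCompact F) (hU : IsOpen U) (hFU : F ⊆ U) :
    ∃ (J : Finset X) (f : X → X → ℝ) (g : X → Y → ℝ),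
      (∀ j ∈ J, Continuous (f j) ∧ HasCompactSupport (f j) ∧ ∀ x, 0 ≤ f j x) ∧
      (∀ j ∈ J, Continuous (g j) ∧ HasCompactSupport (g j) ∧ ∀ y, 0 ≤ g j y) ∧
      (∀ x y, (0:ℝ) ≤ ∑ j ∈ J, f j x * g j y) ∧
      (∀ x y, ∑ j ∈ J, f j x * g j y ≤ 1) ∧
      (∀ p ∈ F, ∑ j ∈ J, f j p.1 * g j p.2 = 1) ∧
      (∀ x y, (0:ℝ) < ∑ j ∈ J, f j x * g j y → (x, y) ∈ U) := by
  classical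
  set C : Set X := Prod.fst '' F with hCdef
  have hC : IsCompact C := hF.image continuous_fst
  -- tube construction around each point of C
  have hslice : ∀ x ∈ C, ∃ (V : Set X) (W : Set Y), IsOpen V ∧ IsOpen W ∧ x ∈ V ∧
      V ×ˢ W ⊆ U ∧ ∀ x' ∈ V, ∀ y : Y, (x', y) ∈ F → y ∈ W := by
    intro x hx
    set Fx : Set Y := {y | (x, y) ∈ F} with hFxdef
    have hFxeq : Fx = Prod.snd '' (F ∩ ({x} ×ˢ (Set.univ : Set Y))) := by
      ext y
      constructor
      · intro hy; exact ⟨(x, y), ⟨hy, rfl, trivial⟩, rfl⟩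
      · rintro ⟨p, ⟨hpF, hp1, -⟩, rfl⟩
        simp only [Set.mem_singleton_iff] at hp1
        simpa [hFxdef, ← hp1, Prod.mk.eta] using hpF
    have hFxc : IsCompact Fx := by
      rw [hFxeq]
      exact (hF.inter_right ((isClosed_singleton).prod isClosed_univ)).image continuous_snd
    have hsub : {x} ×ˢ Fx ⊆ U := by
      rintro ⟨a, b⟩ ⟨ha, hb⟩
      simp only [Set.mem_singleton_iff] at ha
      subst ha
      exact hFU hb
    obtain ⟨V0, W, hV0o, hWo, hxV0, hFxW, hVWU⟩ :=
      generalized_tube_lemma isCompact_singleton hFxc hU hsub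
    set E : Set X := Prod.fst '' (F ∩ ((Set.univ : Set X) ×ˢ Wᶜ)) with hEdef
    have hEc : IsCompact E :=
      (hF.inter_right (isClosed_univ.prod hWo.isClosed_compl)).image continuous_fst
    have hxE : x ∉ E := by
      rintro ⟨p, ⟨hpF, -, hpW⟩, hpx⟩
      refine hpW (hFxW (show (x, p.2) ∈ F from ?_))
      rw [← hpx, Prod.mk.eta]
      exact hpF
    refine ⟨V0 ∩ Eᶜ, W, hV0o.inter hEc.isClosed.isOpen_compl, hWo,
      ⟨hxV0 rfl, hxE⟩, fun p hp => hVWU ⟨hp.1.1, hp.2⟩, ?_⟩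
    rintro x' ⟨-, hx'E⟩ y hx'y
    by_contra hyW
    exact hx'E ⟨(x', y), ⟨hx'y, trivial, hyW⟩, rfl⟩
  choose! V W hVo hWo hxV hVWU hVprop using hslice
  have hcover : C ⊆ ⋃ x ∈ C, V x := fun x hx => Set.mem_biUnion hx (hxV x hx)
  obtain ⟨b, hbC, hbfin, hbcover⟩ :=
    hC.elim_finite_subcover_image (fun x hx => hVo x hx) hcover
  set J : Finset X := hbfin.toFinset with hJdef
  have hJb : ∀ j ∈ J, j ∈ b := fun j hj => hbfin.mem_toFinset.1 hj
  have hJC : ∀ j ∈ J, j ∈ C := fun j hj => hbC (hJb j hj)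
  -- partition of unity on C subordinate to the V's
  have hcover2 : C ⊆ ⋃ i : ↥J, V i.1 := by
    intro x hx
    obtain ⟨j, hjb, hjV⟩ := Set.mem_iUnion₂.1 (hbcover hx)
    exact Set.mem_iUnion.2 ⟨⟨j, hbfin.mem_toFinset.2 hjb⟩, hjV⟩
  obtain ⟨φ, hφsub, hφcp⟩ :=
    PartitionOfUnity.exists_isSubordinate_of_locallyFinite_t2space hC
      (fun i : ↥J => V i.1) (fun i => hVo i.1 (hJC i.1 i.2))
      (locallyFinite_of_finite _) hcover2
  -- companion functions on Y
  have hgex : ∀ i : ↥J, ∃ g : C(Y, ℝ), Set.EqOn g 1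
      (Prod.snd '' (F ∩ (tsupport (φ i) ×ˢ (Set.univ : Set Y)))) ∧
      Set.EqOn g 0 (W i.1)ᶜ ∧ HasCompactSupport g ∧ ∀ y, g y ∈ Set.Icc (0:ℝ) 1 := by
    intro i
    have hDc : IsCompact (Prod.snd '' (F ∩ (tsupport (φ i) ×ˢ (Set.univ : Set Y)))) :=
      (hF.inter_right ((isClosed_tsupport _).prod isClosed_univ)).image continuous_snd
    have hDW : (Prod.snd '' (F ∩ (tsupport (φ i) ×ˢ (Set.univ : Set Y)))) ⊆ W i.1 := by
      rintro y ⟨p, ⟨hpF, hpt, -⟩, rfl⟩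
      exact hVprop i.1 (hJC i.1 i.2) p.1 (hφsub i hpt) p.2 hpF
    exact exists_continuous_one_zero_of_isCompact hDc (hWo i.1 (hJC i.1 i.2)).isClosed_compl
      (Set.disjoint_compl_right_iff_subset.2 hDW)
  choose ψ hψ1 hψ0 hψcp hψicc using hgex
  -- final data
  set Φ : X → X → ℝ := fun j => if h : j ∈ J then ⇑(φ ⟨j, h⟩) else 0 with hΦdef
  set Ψ : X → Y → ℝ := fun j => if h : j ∈ J then ⇑(ψ ⟨j, h⟩) else 0 with hΨdef
  have hΦ : ∀ j (h : j ∈ J), Φ j = ⇑(φ ⟨j, h⟩) := fun j h => by simp only [hΦdef, dif_pos h]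
  have hΨ : ∀ j (h : j ∈ J), Ψ j = ⇑(ψ ⟨j, h⟩) := fun j h => by simp only [hΨdef, dif_pos h]
  have hsum1 : ∀ x : X, ∑ j ∈ J, Φ j x = ∑ i : ↥J, (φ i) x := by
    intro x
    rw [← Finset.sum_coe_sort J]
    exact Finset.sum_congr rfl fun i _ => by rw [hΦ i.1 i.2]
  refine ⟨J, Φ, Ψ, ?_, ?_, ?_, ?_, ?_, ?_⟩
  · intro j hj
    rw [hΦ j hj]
    exact ⟨(φ ⟨j, hj⟩).continuous, hφcp _, fun x => φ.nonneg _ x⟩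
  · intro j hj
    rw [hΨ j hj]
    exact ⟨(ψ ⟨j, hj⟩).continuous, hψcp _, fun y => (hψicc _ y).1⟩
  · intro x y
    refine Finset.sum_nonneg fun j hj => ?_
    rw [hΦ j hj, hΨ j hj]
    exact mul_nonneg (φ.nonneg _ x) ((hψicc _ y).1)
  · intro x y
    have h1 : ∑ j ∈ J, Φ j x * Ψ j y ≤ ∑ j ∈ J, Φ j x := by
      refine Finset.sum_le_sum fun j hj => ?_
      rw [hΦ j hj, hΨ j hj]
      calc (φ ⟨j, hj⟩) x * (ψ ⟨j, hj⟩) y ≤ (φ ⟨j, hj⟩) x * 1 :=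
        mul_le_mul_of_nonneg_left ((hψicc _ y).2) (φ.nonneg _ x)
      _ = (φ ⟨j, hj⟩) x := mul_one _
    refine h1.trans ?_
    rw [hsum1 x, ← finsum_eq_sum_of_fintype]
    exact φ.sum_le_one x
  · rintro ⟨x, y⟩ hp
    have hxC : x ∈ C := ⟨(x, y), hp, rfl⟩
    have h2 : ∀ j ∈ J, Φ j x * Ψ j y = Φ j x := by
      intro j hj
      rw [hΦ j hj, hΨ j hj]
      rcases eq_or_ne ((φ ⟨j, hj⟩) x) 0 with h0 | h0
      · rw [h0, zero_mul]
      · have hxs : x ∈ tsupport (φ ⟨j, hj⟩) := subset_closure (by simpa [Function.support] using h0)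
        have : (ψ ⟨j, hj⟩) y = 1 := hψ1 ⟨j, hj⟩ ⟨(x, y), ⟨hp, hxs, trivial⟩, rfl⟩
        rw [this, mul_one]
    rw [Finset.sum_congr rfl h2, hsum1 x, ← finsum_eq_sum_of_fintype]
    exact φ.sum_eq_one hxC
  · intro x y hpos
    obtain ⟨j, hj, hne⟩ := Finset.exists_ne_zero_of_sum_ne_zero hpos.ne'
    rw [hΦ j hj, hΨ j hj] at hne
    have hφne : (φ ⟨j, hj⟩) x ≠ 0 := fun h => hne (by rw [h, zero_mul])
    have hψne : (ψ ⟨j, hj⟩) y ≠ 0 := fun h => hne (by rw [h, mul_zero])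
    have hxV' : x ∈ V j := hφsub ⟨j, hj⟩ (subset_closure (by simpa [Function.support] using hφne))
    have hyW : y ∈ W j := by
      by_contra hyW
      exact hψne (hψ0 ⟨j, hj⟩ hyW)
    exact hVWU j (hJC j hj) ⟨hxV', hyW⟩
lemma vague_tendsto {ι : Type*} {l : Filter ι} {μi : ι → Measure X} {μ : Measure X}
    (h : Tendsto μi l (@nhds _ (vagueTop X) μ)) {f : X → ℝ} (hf : Continuous f)
    (hcs : HasCompactSupport f) :
    Tendsto (fun i => ∫ x, f x ∂(μi i)) l (𝓝 (∫ x, f x ∂μ)) := by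
  letI : TopologicalSpace (Measure X) := vagueTop X
  have hc : Continuous (fun μ' : Measure X => ∫ x, f x ∂μ') :=
    continuous_iff_le_induced.2 (iInf_le_of_le f (iInf_le_of_le hf (iInf_le _ hcs)))
  exact (hc.tendsto μ).comp h

lemma lintegral_prodsum {κ : Type*} (J : Finset κ) (f : κ → X → ℝ) (g : κ → Y → ℝ)
    (hf : ∀ j ∈ J, Continuous (f j) ∧ HasCompactSupport (f j) ∧ ∀ x, 0 ≤ f j x)
    (hg : ∀ j ∈ J, Continuous (g j) ∧ HasCompactSupport (g j) ∧ ∀ y, 0 ≤ g j y)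
    (μ' : Measure X) (ν' : Measure Y) (h1 : IsFiniteMeasure μ') (h2 : IsFiniteMeasure ν') :
    ∫⁻ p : X × Y, (∑ j ∈ J, ENNReal.ofReal (f j p.1) * ENNReal.ofReal (g j p.2))
        ∂(μ'.prod ν')
      = ∑ j ∈ J, ENNReal.ofReal (∫ x, f j x ∂μ') * ENNReal.ofReal (∫ y, g j y ∂ν') := by
  haveI := h1; haveI := h2
  have hmeas : ∀ j ∈ J, Measurable fun p : X × Y =>
      ENNReal.ofReal (f j p.1) * ENNReal.ofReal (g j p.2) := fun j hj =>
    ((ENNReal.measurable_ofReal.comp ((hf j hj).1.measurable.comp measurable_fst)).mul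
      (ENNReal.measurable_ofReal.comp ((hg j hj).1.measurable.comp measurable_snd)))
  rw [lintegral_finset_sum _ hmeas]
  refine Finset.sum_congr rfl fun j hj => ?_
  have hfm : AEMeasurable (fun x : X => ENNReal.ofReal (f j x)) μ' :=
    (ENNReal.measurable_ofReal.comp ((hf j hj).1.measurable)).aemeasurable
  have hgm : AEMeasurable (fun y : Y => ENNReal.ofReal (g j y)) ν' :=
    (ENNReal.measurable_ofReal.comp ((hg j hj).1.measurable)).aemeasurable
  rw [lintegral_prod_mul hfm hgm]
  rw [← ofReal_integral_eq_lintegral_ofReal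
      ((hf j hj).1.integrable_of_hasCompactSupport (hf j hj).2.1)
      (Filter.Eventually.of_forall ((hf j hj).2.2)),
    ← ofReal_integral_eq_lintegral_ofReal
      ((hg j hj).1.integrable_of_hasCompactSupport (hg j hj).2.1)
      (Filter.Eventually.of_forall ((hg j hj).2.2))]

lemma trans_tendsto {κ : Type*} (J : Finset κ) (f : κ → X → ℝ) (g : κ → Y → ℝ)
    (hf : ∀ j ∈ J, Continuous (f j) ∧ HasCompactSupport (f j) ∧ ∀ x, 0 ≤ f j x)
    (hg : ∀ j ∈ J, Continuous (g j) ∧ HasCompactSupport (g j) ∧ ∀ y, 0 ≤ g j y)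
    {ι : Type*} {l : Filter ι} {μi : ι → Measure X} {νi : ι → Measure Y}
    {μ : Measure X} {ν : Measure Y} (hfin : IsFiniteMeasure μ) (hfin' : IsFiniteMeasure ν)
    (hμfin : ∀ i, IsFiniteMeasure (μi i)) (hνfin : ∀ i, IsFiniteMeasure (νi i))
    (hμ : Tendsto μi l (@nhds _ (vagueTop X) μ)) (hν : Tendsto νi l (@nhds _ (vagueTop Y) ν)) :
    Tendsto (fun i => ∫⁻ p : X × Y,
        (∑ j ∈ J, ENNReal.ofReal (f j p.1) * ENNReal.ofReal (g j p.2)) ∂((μi i).prod (νi i)))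
      l (𝓝 (∫⁻ p : X × Y,
        (∑ j ∈ J, ENNReal.ofReal (f j p.1) * ENNReal.ofReal (g j p.2)) ∂(μ.prod ν))) := by
  rw [lintegral_prodsum J f g hf hg μ ν hfin hfin']
  refine Tendsto.congr (fun i => (lintegral_prodsum J f g hf hg (μi i) (νi i)
    (hμfin i) (hνfin i)).symm) ?_
  refine tendsto_finset_sum _ fun j hj => ?_
  refine ENNReal.Tendsto.mul ?_ (Or.inr ENNReal.ofReal_ne_top) ?_ (Or.inr ENNReal.ofReal_ne_top)
  · exact (ENNReal.continuous_ofReal.tendsto _).comp (vague_tendsto hμ (hf j hj).1 (hf j hj).2.1)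
  · exact (ENNReal.continuous_ofReal.tendsto _).comp (vague_tendsto hν (hg j hj).1 (hg j hj).2.1)

lemma core_lemma (k : X → Y → ℝ≥0∞) (hk : LowerSemicontinuous fun p : X × Y => k p.1 p.2)
    {ι : Type*} (l : Filter ι) [l.NeBot] (μi : ι → Measure X) (νi : ι → Measure Y)
    (μ : Measure X) (ν : Measure Y)
    (hμfin : IsFiniteMeasure μ) (hμreg : μ.Regular) (hμinner : μ.InnerRegular)
    (hνfin : IsFiniteMeasure ν) (hνreg : ν.Regular) (hνinner : ν.InnerRegular)
    (hifin : ∀ i, IsFiniteMeasure (μi i)) (hifin' : ∀ i, IsFiniteMeasure (νi i))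
    (hμ : Tendsto μi l (@nhds _ (vagueTop X) μ)) (hν : Tendsto νi l (@nhds _ (vagueTop Y) ν))
    (t' : ℝ≥0∞) (hbd : ∀ i, energy k (μi i) (νi i) ≤ t') :
    energy k μ ν ≤ t' := by
  classical
  haveI := hμfin; haveI := hμreg; haveI := hμinner
  haveI := hνfin; haveI := hνreg; haveI := hνinner
  set K : X × Y → ℝ≥0∞ := fun p => k p.1 p.2 with hKdef
  set ρ : Measure (X × Y) := μ.prod ν with hρdef
  -- The main claim, for simple functions avoiding `⊤`.
  have claim : ∀ s : MeasureTheory.SimpleFunc (X × Y) ℝ≥0∞, ⇑s ≤ K →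
      (∀ c ∈ s.range, c ≠ ⊤) → ∫⁻ p, s p ∂ρ ≤ t' := by
    intro s hsK htop'
    set T : Finset ℝ≥0∞ := s.range.erase 0 with hTdef
    have hTtop : ∀ c ∈ T, c ≠ ⊤ := fun c hc => htop' c (Finset.mem_of_mem_erase hc)
    have hT0 : ∀ c ∈ T, c ≠ 0 := fun c hc => Finset.ne_of_mem_erase hc
    have hToptop : ⊤ ∉ T := fun h => hTtop ⊤ h rfl
    set B : ℝ≥0∞ → Set (X × Y) := fun c => {p | c ≤ s p} with hBdef
    have hBmeas : ∀ c, MeasurableSet (B c) := fun c => s.measurable measurableSet_Ici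
    have hpt : ∀ p, s p ≤ ∑ c ∈ T, (B c).indicator (fun _ => c - predIn T c) p := by
      intro p
      rcases eq_or_ne (s p) 0 with h0 | h0
      · rw [h0]; exact zero_le
      · have hmem : s p ∈ T := Finset.mem_erase.2 ⟨h0, s.mem_range_self p⟩
        refine le_of_eq ?_
        calc s p = ∑ c ∈ T.filter (· ≤ s p), (c - predIn T c) := (telescope T hToptop _ hmem).symm
        _ = ∑ c ∈ T, if c ≤ s p then c - predIn T c else 0 := Finset.sum_filter _ _
        _ = ∑ c ∈ T, (B c).indicator (fun _ => c - predIn T c) p := by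
            refine Finset.sum_congr rfl fun c hc => ?_
            rw [Set.indicator_apply]
            rfl
    have hstep1 : ∫⁻ p, s p ∂ρ ≤ ∑ c ∈ T, (c - predIn T c) * ρ (B c) := by
      calc ∫⁻ p, s p ∂ρ
          ≤ ∫⁻ p, ∑ c ∈ T, (B c).indicator (fun _ => c - predIn T c) p ∂ρ := lintegral_mono hpt
      _ = ∑ c ∈ T, ∫⁻ p, (B c).indicator (fun _ => c - predIn T c) p ∂ρ :=
          lintegral_finset_sum _ fun c _ => measurable_const.indicator (hBmeas c)
      _ = ∑ c ∈ T, (c - predIn T c) * ρ (B c) :=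
          Finset.sum_congr rfl fun c _ => lintegral_indicator_const (hBmeas c) _
    refine ENNReal.le_of_forall_lt_one_mul_le fun θ hθ1 => ?_
    rcases eq_or_ne θ 0 with rfl | hθ0
    · simp
    have hθtop : θ ≠ ⊤ := (hθ1.trans_le le_top).ne
    refine ENNReal.le_of_forall_pos_le_add fun ε hε ht'top => ?_
    have hsupT : T.sup id ≠ ⊤ := by
      refine (Finset.sup_lt_iff (by simp : (⊥ : ℝ≥0∞) < ⊤)).2 (fun c hc =>
        lt_top_iff_ne_top.2 (hTtop c hc)) |>.ne
    set M : ℝ≥0∞ := (T.card : ℝ≥0∞) * T.sup id + 1 with hMdef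
    have hMtop : M ≠ ⊤ := by
      simp only [hMdef]
      exact ENNReal.add_ne_top.2 ⟨ENNReal.mul_ne_top (ENNReal.natCast_ne_top _) hsupT, one_ne_top⟩
    have hM0 : M ≠ 0 := by simp [hMdef]
    set δ : ℝ≥0∞ := (ε : ℝ≥0∞) / M with hδdef
    have hδ0 : δ ≠ 0 := by
      simp only [hδdef, ne_eq, ENNReal.div_eq_zero_iff, not_or]
      exact ⟨by exact_mod_cast hε.ne', hMtop⟩
    have hFex : ∀ c ∈ T, ∃ F : Set (X × Y), IsCompact F ∧ MeasurableSet F ∧ F ⊆ B c ∧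
        ρ (B c) ≤ ρ F + δ := fun c _ => (prod_inner_regular μ ν (B c) (hBmeas c) δ hδ0).1
    choose! F hFc hFm hFB hFle using hFex
    set U : ℝ≥0∞ → Set (X × Y) := fun c => {p | θ * c < K p} with hUdef
    have hUopen : ∀ c, IsOpen (U c) := fun c => hk.isOpen_preimage (θ * c)
    have hBU : ∀ c ∈ T, B c ⊆ U c := by
      intro c hc p hp
      have h1 : θ * c < c := by
        calc θ * c = c * θ := mul_comm _ _
        _ < c * 1 := by rw [mul_comm c θ, mul_comm c 1]; exact ENNReal.mul_lt_mul_left (hT0 c hc) (hTtop c hc) hθ1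
        _ = c := mul_one _
      exact lt_of_lt_of_le h1 (le_trans hp (hsK p))
    have hpsi : ∀ c ∈ T, ∃ (J : Finset X) (f : X → X → ℝ) (g : X → Y → ℝ),
        (∀ j ∈ J, Continuous (f j) ∧ HasCompactSupport (f j) ∧ ∀ x, 0 ≤ f j x) ∧
        (∀ j ∈ J, Continuous (g j) ∧ HasCompactSupport (g j) ∧ ∀ y, 0 ≤ g j y) ∧
        (∀ x y, (0:ℝ) ≤ ∑ j ∈ J, f j x * g j y) ∧
        (∀ x y, ∑ j ∈ J, f j x * g j y ≤ 1) ∧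
        (∀ p ∈ F c, ∑ j ∈ J, f j p.1 * g j p.2 = 1) ∧
        (∀ x y, (0:ℝ) < ∑ j ∈ J, f j x * g j y → (x, y) ∈ U c) :=
      fun c hc => psi_exists (hFc c hc) (hUopen c) ((hFB c hc).trans (hBU c hc))
    choose! Jc fc gc hfc hgc hnn hle1 heq1 hsupp using hpsi
    set h : ℝ≥0∞ → ℝ≥0∞ := fun c => θ * (c - predIn T c) with hhdef
    have hhtop : ∀ c ∈ T, h c ≠ ⊤ := fun c hc =>
      ENNReal.mul_ne_top hθtop ((tsub_le_self.trans_lt (lt_top_iff_ne_top.2 (hTtop c hc))).ne)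
    set Jbig : Finset (ℝ≥0∞ × X) := T.biUnion (fun c => (Jc c).image fun j => (c, j))
      with hJbigdef
    set fbig : ℝ≥0∞ × X → X → ℝ := fun q x => (h q.1).toReal * fc q.1 q.2 x with hfbigdef
    set gbig : ℝ≥0∞ × X → Y → ℝ := fun q => gc q.1 q.2 with hgbigdef
    have hmemJbig : ∀ q ∈ Jbig, q.1 ∈ T ∧ q.2 ∈ Jc q.1 := by
      intro q hq
      obtain ⟨c, hcT, hq2⟩ := Finset.mem_biUnion.1 hq
      obtain ⟨j, hj, rfl⟩ := Finset.mem_image.1 hq2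
      exact ⟨hcT, hj⟩
    have hfbig : ∀ q ∈ Jbig, Continuous (fbig q) ∧ HasCompactSupport (fbig q) ∧
        ∀ x, 0 ≤ fbig q x := by
      intro q hq
      obtain ⟨hq1, hq2⟩ := hmemJbig q hq
      have hb := hfc q.1 hq1 q.2 hq2
      exact ⟨continuous_const.mul hb.1, hb.2.1.mul_left,
        fun x => mul_nonneg ENNReal.toReal_nonneg (hb.2.2 x)⟩
    have hgbig : ∀ q ∈ Jbig, Continuous (gbig q) ∧ HasCompactSupport (gbig q) ∧
        ∀ y, 0 ≤ gbig q y := by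
      intro q hq
      obtain ⟨hq1, hq2⟩ := hmemJbig q hq
      exact hgc q.1 hq1 q.2 hq2
    have hdisjlvl : (↑T : Set ℝ≥0∞).PairwiseDisjoint
        (fun c => (Jc c).image fun j => (c, j)) := by
      intro c1 h1 c2 h2 hne
      refine Finset.disjoint_left.2 ?_
      rintro ⟨a, b⟩ hq1 hq2
      obtain ⟨j1, -, he1⟩ := Finset.mem_image.1 hq1
      obtain ⟨j2, -, he2⟩ := Finset.mem_image.1 hq2
      injection he1 with ha1 hb1
      injection he2 with ha2 hb2
      exact hne (ha1.trans ha2.symm)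
    have hΨeq : ∀ p : X × Y,
        (∑ q ∈ Jbig, ENNReal.ofReal (fbig q p.1) * ENNReal.ofReal (gbig q p.2))
          = ∑ c ∈ T, h c * ENNReal.ofReal (∑ j ∈ Jc c, fc c j p.1 * gc c j p.2) := by
      intro p
      rw [Finset.sum_biUnion hdisjlvl]
      refine Finset.sum_congr rfl fun c hc => ?_
      rw [Finset.sum_image (fun a _ b _ hab => (Prod.ext_iff.1 hab).2)]
      rw [ENNReal.ofReal_sum_of_nonneg (fun j hj =>
        mul_nonneg ((hfc c hc j hj).2.2 p.1) ((hgc c hc j hj).2.2 p.2)), Finset.mul_sum]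
      refine Finset.sum_congr rfl fun j hj => ?_
      show ENNReal.ofReal ((h c).toReal * fc c j p.1) * ENNReal.ofReal (gc c j p.2) = _
      rw [ENNReal.ofReal_mul ENNReal.toReal_nonneg, ENNReal.ofReal_toReal (hhtop c hc),
        ENNReal.ofReal_mul ((hfc c hc j hj).2.2 p.1), mul_assoc]
    have hΨle : ∀ p : X × Y,
        (∑ q ∈ Jbig, ENNReal.ofReal (fbig q p.1) * ENNReal.ofReal (gbig q p.2)) ≤ K p := by
      intro p
      rw [hΨeq p]
      have hterm : ∀ c ∈ T, h c * ENNReal.ofReal (∑ j ∈ Jc c, fc c j p.1 * gc c j p.2) ≤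
          (if θ * c < K p then h c else 0) := by
        intro c hc
        by_cases hpU : θ * c < K p
        · rw [if_pos hpU]
          calc h c * ENNReal.ofReal (∑ j ∈ Jc c, fc c j p.1 * gc c j p.2)
              ≤ h c * ENNReal.ofReal 1 := by
                gcongr
                exact hle1 c hc p.1 p.2
          _ = h c := by rw [ENNReal.ofReal_one, mul_one]
        · rw [if_neg hpU]
          have hz : ∑ j ∈ Jc c, fc c j p.1 * gc c j p.2 = 0 := by
            rcases lt_or_eq_of_le (hnn c hc p.1 p.2) with hlt | heq
            · exact absurd (hsupp c hc p.1 p.2 hlt) (by simpa [hUdef] using hpU)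
            · exact heq.symm
          rw [hz, ENNReal.ofReal_zero, mul_zero]
      refine le_trans (Finset.sum_le_sum hterm) ?_
      rw [← Finset.sum_filter]
      set Tp := T.filter (fun c => θ * c < K p) with hTpdef
      rcases Tp.eq_empty_or_nonempty with hemp | hne
      · rw [hemp]; simp
      · have hamem := Tp.max'_mem hne
        set a := Tp.max' hne with hadef
        have haT : a ∈ T := (Finset.mem_filter.1 hamem).1
        have haK : θ * a < K p := (Finset.mem_filter.1 hamem).2
        have hTpeq : Tp = T.filter (· ≤ a) := by
          ext c
          simp only [hTpdef, Finset.mem_filter]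
          constructor
          · intro hcmem
            exact ⟨hcmem.1, Tp.le_max' c (Finset.mem_filter.2 hcmem)⟩
          · rintro ⟨hcT, hca⟩
            exact ⟨hcT, lt_of_le_of_lt (mul_le_mul_right hca θ) haK⟩
        rw [hTpeq]
        have hfact : ∑ c ∈ T.filter (· ≤ a), h c
            = θ * ∑ c ∈ T.filter (· ≤ a), (c - predIn T c) := by
          rw [Finset.mul_sum]
        rw [hfact, telescope T hToptop a haT]
        exact haK.le
    have hΨge : ∑ c ∈ T, h c * ρ (F c) ≤
        ∫⁻ p : X × Y, (∑ q ∈ Jbig, ENNReal.ofReal (fbig q p.1) * ENNReal.ofReal (gbig q p.2))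
          ∂ρ := by
      have hptlow : ∀ p : X × Y, ∑ c ∈ T, (F c).indicator (fun _ => h c) p ≤
          ∑ q ∈ Jbig, ENNReal.ofReal (fbig q p.1) * ENNReal.ofReal (gbig q p.2) := by
        intro p
        rw [hΨeq p]
        refine Finset.sum_le_sum fun c hc => ?_
        rw [Set.indicator_apply]
        by_cases hpF : p ∈ F c
        · rw [if_pos hpF, heq1 c hc p hpF, ENNReal.ofReal_one, mul_one]
        · rw [if_neg hpF]; exact zero_le
      calc ∑ c ∈ T, h c * ρ (F c)
          = ∑ c ∈ T, ∫⁻ p, (F c).indicator (fun _ => h c) p ∂ρ :=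
            Finset.sum_congr rfl fun c hc => (lintegral_indicator_const (hFm c hc) _).symm
      _ = ∫⁻ p, ∑ c ∈ T, (F c).indicator (fun _ => h c) p ∂ρ :=
            (lintegral_finset_sum _ fun c hc => measurable_const.indicator (hFm c hc)).symm
      _ ≤ _ := lintegral_mono hptlow
    have hΨt' : ∫⁻ p : X × Y,
        (∑ q ∈ Jbig, ENNReal.ofReal (fbig q p.1) * ENNReal.ofReal (gbig q p.2)) ∂ρ ≤ t' := by
      refine le_of_tendsto (trans_tendsto Jbig fbig gbig hfbig hgbig hμfin hνfin
        hifin hifin' hμ hν) (Filter.Eventually.of_forall fun i => ?_)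
      calc ∫⁻ p : X × Y, (∑ q ∈ Jbig, ENNReal.ofReal (fbig q p.1) * ENNReal.ofReal (gbig q p.2))
            ∂((μi i).prod (νi i)) ≤ ∫⁻ p : X × Y, K p ∂((μi i).prod (νi i)) :=
          lintegral_mono fun p => hΨle p
      _ ≤ t' := hbd i
    have hhb : ∀ c ∈ T, h c ≤ T.sup id := by
      intro c hc
      calc h c ≤ 1 * (c - predIn T c) := mul_le_mul_left hθ1.le _
      _ = c - predIn T c := one_mul _
      _ ≤ c := tsub_le_self
      _ ≤ T.sup id := Finset.le_sup (f := id) hc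
    calc θ * ∫⁻ p, s p ∂ρ ≤ θ * ∑ c ∈ T, (c - predIn T c) * ρ (B c) :=
          mul_le_mul_right hstep1 θ
    _ = ∑ c ∈ T, h c * ρ (B c) := by
        rw [Finset.mul_sum]
        exact Finset.sum_congr rfl fun c hc => by rw [hhdef, mul_assoc]
    _ ≤ ∑ c ∈ T, h c * (ρ (F c) + δ) := Finset.sum_le_sum fun c hc =>
          mul_le_mul_right (hFle c hc) _
    _ = ∑ c ∈ T, h c * ρ (F c) + ∑ c ∈ T, h c * δ := by
        rw [← Finset.sum_add_distrib]
        exact Finset.sum_congr rfl fun c hc => mul_add _ _ _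
    _ ≤ t' + ε := by
        refine add_le_add (hΨge.trans hΨt') ?_
        calc ∑ c ∈ T, h c * δ ≤ ∑ c ∈ T, T.sup id * δ :=
              Finset.sum_le_sum fun c hc => mul_le_mul_left (hhb c hc) δ
        _ = (T.card : ℝ≥0∞) * T.sup id * δ := by
            rw [Finset.sum_const, nsmul_eq_mul, mul_assoc]
        _ ≤ M * δ := mul_le_mul_left (by rw [hMdef]; exact le_add_right le_rfl) δ
        _ = ε := by rw [hδdef, ENNReal.mul_div_cancel hM0 hMtop]
  -- reduce the energy to the claim
  show ∫⁻ p : X × Y, k p.1 p.2 ∂ρ ≤ t'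
  rw [MeasureTheory.lintegral_def]
  refine iSup_le fun s => iSup_le fun hsK => ?_
  rw [← MeasureTheory.SimpleFunc.lintegral_eq_lintegral]
  have happ : ∀ (n : ℕ) (p : X × Y),
      (s ⊓ SimpleFunc.const _ ((n : ℕ) : ℝ≥0∞)) p = min (s p) ((n : ℕ) : ℝ≥0∞) := by
    intro n p
    rw [MeasureTheory.SimpleFunc.coe_inf]
    rfl
  have htrunc : ∀ p : X × Y, ⨆ n : ℕ, (s ⊓ SimpleFunc.const _ ((n : ℕ) : ℝ≥0∞)) p = s p := by
    intro p
    simp only [happ]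
    rcases eq_or_ne (s p) ⊤ with htop | htop
    · rw [htop]
      refine le_antisymm le_top ?_
      calc (⊤ : ℝ≥0∞) = ⨆ n : ℕ, (n : ℝ≥0∞) := ENNReal.iSup_natCast.symm
      _ ≤ ⨆ n : ℕ, min ⊤ (n : ℝ≥0∞) := by
          refine iSup_mono fun n => ?_
          rw [min_eq_right le_top]
    · obtain ⟨n, hn⟩ := ENNReal.exists_nat_gt htop
      refine le_antisymm (iSup_le fun m => min_le_left _ _) ?_
      refine le_iSup_of_le n ?_
      rw [min_eq_left hn.le]
  have hmono : Monotone fun (n : ℕ) (p : X × Y) =>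
      ((s ⊓ SimpleFunc.const _ ((n : ℕ) : ℝ≥0∞)) p : ℝ≥0∞) := by
    intro n m hnm p
    simp only [happ]
    exact min_le_min le_rfl (by exact_mod_cast Nat.cast_le.2 hnm)
  calc ∫⁻ p, s p ∂ρ = ∫⁻ p, ⨆ n : ℕ, (s ⊓ SimpleFunc.const _ ((n : ℕ) : ℝ≥0∞)) p ∂ρ :=
        lintegral_congr fun p => (htrunc p).symm
  _ = ⨆ n : ℕ, ∫⁻ p, (s ⊓ SimpleFunc.const _ ((n : ℕ) : ℝ≥0∞)) p ∂ρ :=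
        lintegral_iSup (fun n => (s ⊓ SimpleFunc.const _ ((n : ℕ) : ℝ≥0∞)).measurable) hmono
  _ ≤ t' := by
        refine iSup_le fun n => claim _ (fun p => le_trans (by rw [happ]; exact min_le_left _ _)
          (hsK p)) ?_
        intro c hc
        obtain ⟨p, hp⟩ := MeasureTheory.SimpleFunc.mem_range.1 hc
        have hle : (s ⊓ SimpleFunc.const _ ((n : ℕ) : ℝ≥0∞)) p ≤ ((n : ℕ) : ℝ≥0∞) := by
          rw [happ]; exact min_le_right _ _
        rw [hp] at hle
        exact (hle.trans_lt (ENNReal.natCast_lt_top n)).ne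

end Aux

/-- Lemma 5: if `S(L)` is vaguely compact and every `μ ∈ R(H)` is the vague
limit of a net of measures of the family concentrated on compact subsets of `H`, then
`q̲(R(H), S(L)) = sup_{K ⊂⊂ H} q̲(R(K), S(L))`. -/
theorem statement9 {X Y : Type*} [TopologicalSpace X] [MeasurableSpace X] [BorelSpace X]
    [LocallyCompactSpace X] [T2Space X]
    [TopologicalSpace Y] [MeasurableSpace Y] [BorelSpace Y]
    [LocallyCompactSpace Y] [T2Space Y]
    (k : X → Y → ℝ≥0∞) (hk : LowerSemicontinuous fun p : X × Y => k p.1 p.2)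
    (H : Set X) (L : Set Y)
    (R : Set (Measure X)) (S : Set (Measure Y)) (hR : R ⊆ MM H) (hS : S ⊆ MM L)
    (hSc : @IsCompact _ (vagueTop Y) S)
    (hyp : ∀ μ ∈ R, ∃ (𝒦 : Set (Set X)) (m : Set X → Measure X),
      𝒦.Nonempty ∧ (∀ K ∈ 𝒦, IsCompact K ∧ K ⊆ H) ∧ DirectedOn (· ⊆ ·) 𝒦 ∧
      (∀ K ∈ 𝒦, m K ∈ R ∧ Concentrated (m K) K) ∧
      @Filter.Tendsto ↥𝒦 (Measure X) (fun K => m K.1) Filter.atTop (@nhds _ (vagueTop X) μ)) :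
    qlow k R S = ⨆ (K : Set X) (_ : IsCompact K) (_ : K ⊆ H),
      qlow k {μ ∈ R | Concentrated μ K} S := by
  classical
  simp only [qlow]
  refine le_antisymm ?_ ?_
  · -- hard direction
    refine iSup₂_le fun μ hμR => ?_
    obtain ⟨𝒦, m, h𝒦ne, h𝒦cpt, hdir, hmR, htend⟩ := hyp μ hμR
    have hKle : ∀ K ∈ 𝒦, (⨅ ν ∈ S, energy k (m K) ν) ≤
        ⨆ (K : Set X) (_ : IsCompact K) (_ : K ⊆ H),
          ⨆ μ' ∈ {μ' ∈ R | Concentrated μ' K}, ⨅ ν ∈ S, energy k μ' ν := by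
      intro K hK
      have h1 : (⨅ ν ∈ S, energy k (m K) ν) ≤
          ⨆ μ' ∈ {μ' ∈ R | Concentrated μ' K}, ⨅ ν ∈ S, energy k μ' ν :=
        le_iSup₂ (f := fun (μ' : Measure X) (_ : μ' ∈ {μ' ∈ R | Concentrated μ' K}) =>
          ⨅ ν ∈ S, energy k μ' ν) (m K) ⟨(hmR K hK).1, (hmR K hK).2⟩
      exact h1.trans (le_iSup₂_of_le K (h𝒦cpt K hK).1 (le_iSup_of_le (h𝒦cpt K hK).2 le_rfl))
    rcases S.eq_empty_or_nonempty with rfl | hSne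
    · obtain ⟨K0, hK0⟩ := h𝒦ne
      have h2 := hKle K0 hK0
      rw [iInf_emptyset] at h2
      exact le_trans le_top h2
    · by_contra hcon
      rw [not_le] at hcon
      obtain ⟨t', ht1, ht2⟩ := exists_between hcon
      have hchoice : ∀ K : ↥𝒦, ∃ ν, ν ∈ S ∧ energy k (m K.1) ν < t' := by
        intro K
        have h2 : (⨅ ν ∈ S, energy k (m K.1) ν) < t' := lt_of_le_of_lt (hKle K.1 K.2) ht1
        obtain ⟨ν, hν⟩ := iInf_lt_iff.1 h2
        obtain ⟨hνS, hνlt⟩ := iInf_lt_iff.1 hν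
        exact ⟨ν, hνS, hνlt⟩
      choose νf hνfS hνflt using hchoice
      haveI hne𝒦 : Nonempty ↥𝒦 := h𝒦ne.to_subtype
      haveI hdir𝒦 : IsDirected ↥𝒦 (· ≤ ·) := ⟨fun a b => by
        obtain ⟨c, hc, hac, hbc⟩ := hdir a.1 a.2 b.1 b.2
        exact ⟨⟨c, hc⟩, hac, hbc⟩⟩
      haveI : (atTop : Filter ↥𝒦).NeBot := atTop_neBot_iff.2 ⟨hne𝒦, hdir𝒦⟩
      haveI : (Filter.map νf (atTop : Filter ↥𝒦)).NeBot := Filter.map_neBot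
      have hmapS : Filter.map νf (atTop : Filter ↥𝒦) ≤ 𝓟 S :=
        Filter.le_principal_iff.2 (Filter.mem_map.2 (Filter.univ_mem' fun i => hνfS i))
      letI : TopologicalSpace (Measure Y) := vagueTop Y
      obtain ⟨ν₀, hν₀S, hclus⟩ := hSc hmapS
      obtain ⟨U, hUle, hUtend⟩ :=
        mapClusterPt_iff_ultrafilter.1 (hclus : MapClusterPt ν₀ (atTop : Filter ↥𝒦) νf)
      have hμtend : Tendsto (fun K : ↥𝒦 => m K.1) (U : Filter ↥𝒦) (@nhds _ (vagueTop X) μ) :=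
        htend.mono_left hUle
      obtain ⟨hμfin, hμreg, hμinner, -⟩ := hR hμR
      obtain ⟨hνfin, hνreg, hνinner, -⟩ := hS hν₀S
      have hifin : ∀ K : ↥𝒦, IsFiniteMeasure (m K.1) := fun K => (hR (hmR K.1 K.2).1).1
      have hifin' : ∀ K : ↥𝒦, IsFiniteMeasure (νf K) := fun K => (hS (hνfS K)).1
      have hbd : ∀ K : ↥𝒦, energy k (m K.1) (νf K) ≤ t' := fun K => (hνflt K).le
      have hcore := core_lemma k hk (U : Filter ↥𝒦) (fun K => m K.1) νf μ ν₀
        hμfin hμreg hμinner hνfin hνreg hνinner hifin hifin' hμtend hUtend t' hbd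
      exact absurd ((iInf₂_le ν₀ hν₀S).trans hcore) (not_le.2 ht2)
  · -- easy direction
    refine iSup_le fun K => iSup_le fun hK => iSup_le fun hKH => ?_
    refine iSup₂_le fun μ' hμ' => ?_
    exact le_iSup₂_of_le μ' hμ'.1 le_rfl

end
end

section
/- Let R(H) ⊆ M(H) be a w*-compact convex set of measures on a compact set H ⊆ X, and let the kernel k : X × X → [0,∞] be lower semicontinuous and positive. Then w(R(H)) ≤ q(R(H)), i.e. inf_{μ∈R(H)} E(μ,μ) ≤ inf_{μ∈R(H)} sup_{ν∈Ex R(H)} E(μ,ν). -/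
open MeasureTheory Topology Filter ENNReal

noncomputable section

section AuxLemmas
open NNReal Set

lemma aux_exists_eps {T r C : ℝ≥0∞} (hrT : r < T) (hT : T ≠ ⊤) (hC : C ≠ ⊤) :
    ∃ ε : ℝ≥0∞, ε ≠ 0 ∧ r + C * ε < T := by
  rcases eq_or_ne C 0 with rfl | hC0
  · exact ⟨1, one_ne_zero, by simpa using hrT⟩
  · refine ⟨(T - r) / 2 / C, ?_, ?_⟩
    · apply ENNReal.div_ne_zero.2
      constructor
      · apply ENNReal.div_ne_zero.2
        exact ⟨by simpa [tsub_eq_zero_iff_le] using hrT.not_ge, by norm_num⟩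
      · exact hC
    · have h1 : C * ((T - r) / 2 / C) = (T - r) / 2 := by
        rw [mul_comm, ENNReal.div_mul_cancel hC0 hC]
      rw [h1]
      have h2 : (T - r) / 2 < T - r :=
        ENNReal.half_lt_self (by simpa [tsub_eq_zero_iff_le] using hrT.not_ge)
          (by simp [hT, ENNReal.sub_ne_top])
      calc r + (T - r) / 2 < r + (T - r) :=
            ENNReal.add_lt_add_left (hrT.trans_le le_top).ne h2
        _ = T := by rw [add_comm, tsub_add_cancel_of_le hrT.le]

-- theta-choice lemma

lemma aux_exists_theta {T r : ℝ≥0∞} (hrT : r < T) (hT : T ≠ ⊤) :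
    ∃ θ : ℝ≥0, θ < 1 ∧ r < (θ : ℝ≥0∞) * T := by
  have hr : r ≠ ⊤ := (hrT.trans_le le_top).ne
  set rr := r.toNNReal
  set tt := T.toNNReal
  have htt : 0 < tt := by
    have : 0 < T := lt_of_le_of_lt (zero_le : (0:ℝ≥0∞) ≤ r) hrT
    exact ENNReal.toNNReal_pos this.ne' hT
  have hlt : rr < tt := by
    exact (ENNReal.toNNReal_lt_toNNReal hr hT).2 hrT
  refine ⟨(rr + tt) / (2 * tt), ?_, ?_⟩
  · rw [div_lt_one (by positivity)]
    calc rr + tt < tt + tt := by exact add_lt_add_left hlt tt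
      _ = 2 * tt := by ring
  · have hTcoe : (tt : ℝ≥0∞) = T := ENNReal.coe_toNNReal hT
    have hrcoe : (rr : ℝ≥0∞) = r := ENNReal.coe_toNNReal hr
    rw [← hTcoe, ← hrcoe, ← ENNReal.coe_mul, ENNReal.coe_lt_coe]
    have : (rr + tt) / (2 * tt) * tt = (rr + tt) / 2 := by
      field_simp
    rw [this]
    rw [lt_div_iff₀ (by norm_num)]
    calc rr * 2 = rr + rr := by ring
      _ < rr + tt := by exact add_lt_add_right hlt rr

lemma aux_exists_compacts {Y : Type*} [TopologicalSpace Y] [MeasurableSpace Y] [BorelSpace Y]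
    [T2Space Y] {μ : Measure Y} [IsFiniteMeasure μ] (hreg : μ.InnerRegular)
    {g : Y → ℝ≥0∞} {r : ℝ≥0∞} (hr : r < ∫⁻ y, g y ∂μ) :
    ∃ (s : Finset ℝ≥0) (K : ℝ≥0 → Set Y) (b : ℝ≥0 → ℝ≥0),
      (∀ a ∈ s, IsCompact (K a)) ∧
      (∀ a ∈ s, ∀ a' ∈ s, a ≠ a' → Disjoint (K a) (K a')) ∧
      (∀ a ∈ s, ∀ x ∈ K a, (b a : ℝ≥0∞) < g x) ∧
      r < ∑ a ∈ s, (b a : ℝ≥0∞) * μ (K a) := by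
  classical
  rw [lintegral_eq_nnreal] at hr
  rw [lt_iSup_iff] at hr
  obtain ⟨φ, hr⟩ := hr
  rw [lt_iSup_iff] at hr
  obtain ⟨hφ, hr⟩ := hr
  rw [SimpleFunc.map_lintegral] at hr
  set s : Finset ℝ≥0 := φ.range.filter (fun a => a ≠ 0) with hs
  have hsum : ∑ a ∈ φ.range, (a : ℝ≥0∞) * μ (φ ⁻¹' {a}) =
      ∑ a ∈ s, (a : ℝ≥0∞) * μ (φ ⁻¹' {a}) := by
    rw [hs]
    refine (Finset.sum_filter_of_ne ?_).symm
    intro a _ h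
    rcases eq_or_ne a 0 with rfl | h0
    · simp at h
    · exact h0
  rw [hsum] at hr
  set T := ∑ a ∈ s, (a : ℝ≥0∞) * μ (φ ⁻¹' {a}) with hT
  have hTtop : T ≠ ⊤ := by
    refine (ENNReal.sum_lt_top.2 fun a _ => ?_).ne
    exact ENNReal.mul_lt_top ENNReal.coe_lt_top (measure_lt_top μ _)
  set C := ∑ a ∈ s, (a : ℝ≥0∞) with hC
  have hCtop : C ≠ ⊤ := by
    refine (ENNReal.sum_lt_top.2 fun a _ => ?_).ne
    exact ENNReal.coe_lt_top
  obtain ⟨ε, hε0, hε⟩ := aux_exists_eps hr hTtop hCtop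
  -- choose compacts
  have hKex : ∀ a ∈ s, ∃ K, K ⊆ φ ⁻¹' {a} ∧ IsCompact K ∧ μ (φ ⁻¹' {a}) < μ K + ε := by
    intro a _
    exact hreg.innerRegular.exists_subset_lt_add isCompact_empty
      (φ.measurableSet_preimage {a}) (measure_lt_top μ _).ne hε0
  choose! K hK1 hK2 hK3 using hKex
  have hsumlt : r < ∑ a ∈ s, (a : ℝ≥0∞) * μ (K a) := by
    have h1 : T ≤ ∑ a ∈ s, (a : ℝ≥0∞) * μ (K a) + C * ε := by
      rw [hT, hC, Finset.sum_mul, ← Finset.sum_add_distrib]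
      refine Finset.sum_le_sum fun a ha => ?_
      calc (a : ℝ≥0∞) * μ (φ ⁻¹' {a}) ≤ (a : ℝ≥0∞) * (μ (K a) + ε) :=
            mul_le_mul_right (hK3 a ha).le _
        _ = (a : ℝ≥0∞) * μ (K a) + (a : ℝ≥0∞) * ε := by rw [mul_add]
    by_contra hcon
    push_neg at hcon
    have : T ≤ r + C * ε := h1.trans (add_le_add_left hcon _)
    exact absurd hε (not_lt.2 this)
  have hT2top : (∑ a ∈ s, (a : ℝ≥0∞) * μ (K a)) ≠ ⊤ := by
    refine (ENNReal.sum_lt_top.2 fun a _ => ?_).ne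
    exact ENNReal.mul_lt_top ENNReal.coe_lt_top (measure_lt_top μ _)
  obtain ⟨θ, hθ1, hθ⟩ := aux_exists_theta hsumlt hT2top
  refine ⟨s, K, fun a => θ * a, fun a ha => hK2 a ha, ?_, ?_, ?_⟩
  · intro a ha a' ha' hne
    exact Set.disjoint_of_subset (hK1 a ha) (hK1 a' ha')
      (by simp [Set.disjoint_left]; intro x hx; simp_all)
  · intro a ha x hx
    have h1 : (a : ℝ≥0∞) ≤ g x := by
      have : φ x = a := hK1 a ha hx
      calc (a : ℝ≥0∞) = (φ x : ℝ≥0∞) := by rw [this]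
        _ ≤ g x := hφ x
    have h2 : (θ * a : ℝ≥0∞) < (a : ℝ≥0∞) := by
      have ha0 : a ≠ 0 := by
        rw [hs] at ha; exact (Finset.mem_filter.1 ha).2
      rw [ENNReal.coe_lt_coe.symm] at hθ1
      push_cast
      calc (θ : ℝ≥0∞) * a < 1 * a := by
            exact ENNReal.mul_lt_mul_left (by exact_mod_cast ha0) ENNReal.coe_ne_top
              (by exact_mod_cast hθ1)
        _ = a := one_mul _
    calc ((θ * a : ℝ≥0) : ℝ≥0∞) = (θ : ℝ≥0∞) * a := by push_cast; ring
      _ < (a : ℝ≥0∞) := h2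
      _ ≤ g x := h1
  · calc r < (θ : ℝ≥0∞) * ∑ a ∈ s, (a : ℝ≥0∞) * μ (K a) := hθ
      _ = ∑ a ∈ s, ((θ * a : ℝ≥0) : ℝ≥0∞) * μ (K a) := by
          rw [Finset.mul_sum]
          refine Finset.sum_congr rfl fun a _ => ?_
          push_cast
          ring

lemma aux_sum_indicator_le {Y : Type*} {ι : Type*} (t : Finset ι) (A : ι → Set Y)
    (c : ι → ℝ≥0∞) (hdisj : ∀ i ∈ t, ∀ i' ∈ t, i ≠ i' → Disjoint (A i) (A i'))
    (h : Y → ℝ≥0∞) (hh : ∀ i ∈ t, ∀ x ∈ A i, c i ≤ h x) (x : Y) :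
    ∑ i ∈ t, (A i).indicator (fun _ => c i) x ≤ h x := by
  classical
  by_cases hx : ∃ i ∈ t, x ∈ A i
  · obtain ⟨i₀, hi₀, hxi₀⟩ := hx
    rw [Finset.sum_eq_single_of_mem i₀ hi₀]
    · simpa [Set.indicator_of_mem hxi₀] using hh i₀ hi₀ x hxi₀
    · intro i hi hne
      have : x ∉ A i := fun hmem => (hdisj i hi i₀ hi₀ hne).le_bot ⟨hmem, hxi₀⟩
      simp [Set.indicator_of_notMem this]
  · push_neg at hx
    rw [Finset.sum_eq_zero fun i hi => Set.indicator_of_notMem (hx i hi) _]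
    exact zero_le

lemma aux_sum_le_lintegral {Y : Type*} [TopologicalSpace Y] [MeasurableSpace Y] [BorelSpace Y]
    [T2Space Y] (μ : Measure Y) (s : Finset ℝ≥0) (K : ℝ≥0 → Set Y) (b : ℝ≥0 → ℝ≥0)
    (hK : ∀ a ∈ s, IsCompact (K a))
    (hdisj : ∀ a ∈ s, ∀ a' ∈ s, a ≠ a' → Disjoint (K a) (K a'))
    (h : Y → ℝ≥0∞) (hh : ∀ a ∈ s, ∀ x ∈ K a, (b a : ℝ≥0∞) ≤ h x) :
    ∑ a ∈ s, (b a : ℝ≥0∞) * μ (K a) ≤ ∫⁻ y, h y ∂μ := by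
  classical
  have hmeas : ∀ a ∈ s, MeasurableSet (K a) := fun a ha => (hK a ha).isClosed.measurableSet
  calc ∑ a ∈ s, (b a : ℝ≥0∞) * μ (K a)
      = ∑ a ∈ s, ∫⁻ y, (K a).indicator (fun _ => (b a : ℝ≥0∞)) y ∂μ := by
        refine Finset.sum_congr rfl fun a ha => ?_
        rw [lintegral_indicator (hmeas a ha)]
        simp [mul_comm]
    _ = ∫⁻ y, ∑ a ∈ s, (K a).indicator (fun _ => (b a : ℝ≥0∞)) y ∂μ := by
        rw [lintegral_finset_sum]
        intro a ha
        exact measurable_const.indicator (hmeas a ha)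
    _ ≤ ∫⁻ y, h y ∂μ :=
        lintegral_mono (aux_sum_indicator_le s K (fun a => (b a : ℝ≥0∞)) hdisj h hh)

lemma aux_rect {X : Type*} [TopologicalSpace X] [MeasurableSpace X] [BorelSpace X]
    [T2Space X] {k : X → X → ℝ≥0∞} (hk : LowerSemicontinuous fun p : X × X => k p.1 p.2)
    {μ : Measure X} [IsFiniteMeasure μ] (hreg : μ.InnerRegular)
    {y : X} {b : ℝ≥0∞} (hb : b < pot k μ y) :
    ∃ V : Set X, IsOpen V ∧ y ∈ V ∧ ∃ g : X → ℝ≥0∞, Measurable g ∧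
      (∀ y' ∈ V, ∀ x, g x ≤ k x y') ∧ b < ∫⁻ x, g x ∂μ := by
  classical
  obtain ⟨s, K, β, hKc, hdisj, hlt, hsum⟩ := aux_exists_compacts hreg hb
  have hnb : ∀ a ∈ s, ∀ x ∈ K a, ∃ U, IsOpen U ∧ x ∈ U ∧ ∃ V, IsOpen V ∧ y ∈ V ∧
      ∀ p ∈ U ×ˢ V, (β a : ℝ≥0∞) < k p.1 p.2 := by
    intro a ha x hx
    have h1 := hk (x, y) _ (hlt a ha x hx)
    rw [nhds_prod_eq, Filter.eventually_prod_iff] at h1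
    obtain ⟨P, hP, Q, hQ, hPQ⟩ := h1
    obtain ⟨U, hUP, hUo, hxU⟩ := mem_nhds_iff.1 hP
    obtain ⟨V, hVQ, hVo, hyV⟩ := mem_nhds_iff.1 hQ
    exact ⟨U, hUo, hxU, V, hVo, hyV, fun p hp => hPQ (hUP hp.1) (hVQ hp.2)⟩
  have hVa : ∀ a ∈ s, ∃ V, IsOpen V ∧ y ∈ V ∧ ∀ y' ∈ V, ∀ x ∈ K a, (β a : ℝ≥0∞) < k x y' := by
    intro a ha
    choose U hUo hxU V hVo hyV hUV using hnb a ha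
    obtain ⟨t, ht⟩ := (hKc a ha).elim_nhds_subcover'
      (fun x hx => U x hx) (fun x hx => (hUo x hx).mem_nhds (hxU x hx))
    refine ⟨⋂ x ∈ t, V x x.2, isOpen_biInter_finset fun x _ => hVo x x.2, ?_, ?_⟩
    · exact Set.mem_biInter fun x _ => hyV x x.2
    · intro y' hy' x hx
      obtain ⟨x', hx't, hxU'⟩ := Set.mem_iUnion₂.1 (ht hx)
      have : y' ∈ V x' x'.2 := by
        simp only [Set.mem_iInter] at hy'
        exact hy' x' hx't
      exact hUV x' x'.2 (x, y') ⟨hxU', this⟩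
  choose! V hVo hyV hVp using hVa
  refine ⟨⋂ a ∈ s, V a, isOpen_biInter_finset fun a ha => hVo a ha,
    Set.mem_biInter fun a ha => hyV a ha,
    fun x => ∑ a ∈ s, (K a).indicator (fun _ => (β a : ℝ≥0∞)) x, ?_, ?_, ?_⟩
  · exact Finset.measurable_sum s fun a ha =>
      measurable_const.indicator (hKc a ha).isClosed.measurableSet
  · intro y' hy' x
    refine aux_sum_indicator_le s K (fun a => (β a : ℝ≥0∞)) hdisj (fun x => k x y') ?_ x
    intro a ha x' hx'
    have : y' ∈ V a := by
      simp only [Set.mem_iInter] at hy'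
      exact hy' a ha
    exact (hVp a ha y' this x' hx').le
  · refine lt_of_lt_of_le hsum (le_of_eq ?_)
    rw [lintegral_finset_sum]
    · refine Finset.sum_congr rfl fun a ha => ?_
      rw [lintegral_indicator (hKc a ha).isClosed.measurableSet]
      simp [mul_comm]
    · exact fun a ha => measurable_const.indicator (hKc a ha).isClosed.measurableSet

lemma aux_sep {X : Type*} [TopologicalSpace X] [T2Space X] (s : Finset ℝ≥0) (C : ℝ≥0 → Set X)
    (hC : ∀ a ∈ s, IsCompact (C a))
    (hdisj : ∀ a ∈ s, ∀ a' ∈ s, a ≠ a' → Disjoint (C a) (C a')) :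
    ∃ O : ℝ≥0 → Set X, (∀ a ∈ s, IsOpen (O a)) ∧ (∀ a ∈ s, C a ⊆ O a) ∧
      (∀ a ∈ s, ∀ a' ∈ s, a ≠ a' → Disjoint (O a) (O a')) := by
  classical
  induction s using Finset.induction_on with
  | empty => exact ⟨fun _ => ∅, by simp, by simp, by simp⟩
  | @insert a s ha ih =>
      obtain ⟨O, hOo, hCO, hOdisj⟩ := ih
        (fun a' ha' => hC a' (Finset.mem_insert_of_mem ha'))
        (fun a' h1 a'' h2 hne => hdisj a' (Finset.mem_insert_of_mem h1) a''
          (Finset.mem_insert_of_mem h2) hne)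
      have hsep : ∀ a' ∈ s, ∃ W W' : Set X, IsOpen W ∧ IsOpen W' ∧ C a ⊆ W ∧ C a' ⊆ W' ∧
          Disjoint W W' := by
        intro a' ha'
        have hne : a ≠ a' := fun h => ha (h ▸ ha')
        obtain ⟨W, W', hWo, hW'o, hCW, hC'W', hWW'⟩ :=
          SeparatedNhds.of_isCompact_isCompact (hC a (Finset.mem_insert_self a s))
            (hC a' (Finset.mem_insert_of_mem ha'))
            (hdisj a (Finset.mem_insert_self a s) a' (Finset.mem_insert_of_mem ha') hne)
        exact ⟨W, W', hWo, hW'o, hCW, hC'W', hWW'⟩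
      choose! W W' hWo hW'o hCW hC'W' hWW' using hsep
      set Oa : Set X := ⋂ a' ∈ s, W a' with hOa
      refine ⟨fun a'' => if a'' = a then Oa else O a'' ∩ W' a'', ?_, ?_, ?_⟩
      · intro a'' ha''
        rcases Finset.mem_insert.1 ha'' with rfl | h
        · simp only [if_pos rfl, hOa]
          exact isOpen_biInter_finset fun a' ha' => hWo a' ha'
        · have hne : a'' ≠ a := fun heq => ha (heq ▸ h)
          simp only [if_neg hne]
          exact (hOo a'' h).inter (hW'o a'' h)
      · intro a'' ha''
        rcases Finset.mem_insert.1 ha'' with rfl | h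
        · simp only [if_pos rfl, hOa]
          exact Set.subset_iInter₂ fun a' ha' => hCW a' ha'
        · have hne : a'' ≠ a := fun heq => ha (heq ▸ h)
          simp only [if_neg hne]
          exact Set.subset_inter (hCO a'' h) (hC'W' a'' h)
      · intro a₁ h₁ a₂ h₂ hne
        rcases Finset.mem_insert.1 h₁ with rfl | h₁s
        · rcases Finset.mem_insert.1 h₂ with rfl | h₂s
          · exact absurd rfl hne
          · have hne2 : a₂ ≠ a₁ := fun heq => ha (heq ▸ h₂s)
            simp only [if_pos rfl, if_neg hne2, hOa]
            refine Set.disjoint_of_subset (Set.biInter_subset_of_mem h₂s)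
              Set.inter_subset_right (hWW' a₂ h₂s)
        · rcases Finset.mem_insert.1 h₂ with rfl | h₂s
          · have hne1 : a₁ ≠ a₂ := fun heq => ha (heq ▸ h₁s)
            simp only [if_pos rfl, if_neg hne1, hOa]
            refine (Set.disjoint_of_subset Set.inter_subset_right
              (Set.biInter_subset_of_mem h₁s) (hWW' a₁ h₁s).symm)
          · have hne1 : a₁ ≠ a := fun heq => ha (heq ▸ h₁s)
            have hne2 : a₂ ≠ a := fun heq => ha (heq ▸ h₂s)
            simp only [if_neg hne1, if_neg hne2]
            exact Set.disjoint_of_subset Set.inter_subset_left Set.inter_subset_left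
              (hOdisj a₁ h₁s a₂ h₂s hne)

lemma aux_prod_lb {X : Type*} [TopologicalSpace X] [MeasurableSpace X] [BorelSpace X]
    {k : X → X → ℝ≥0∞} {μ ν : Measure X} [SFinite μ] [SFinite ν]
    {ι : Type*} (t : Finset ι) (Q : ι → Set X) (g : ι → X → ℝ≥0∞)
    (hQm : ∀ i ∈ t, MeasurableSet (Q i))
    (hQd : ∀ i ∈ t, ∀ i' ∈ t, i ≠ i' → Disjoint (Q i) (Q i'))
    (hg : ∀ i ∈ t, Measurable (g i))
    (hgk : ∀ i ∈ t, ∀ y ∈ Q i, ∀ x, g i x ≤ k x y) :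
    ∑ i ∈ t, (∫⁻ x, g i x ∂μ) * ν (Q i) ≤ energy k μ ν := by
  classical
  set G : X × X → ℝ≥0∞ := fun p => ∑ i ∈ t, (Q i).indicator (fun _ => g i p.1) p.2 with hG
  have hGm : Measurable G := by
    refine Finset.measurable_sum t fun i hi => ?_
    have : (fun p : X × X => (Q i).indicator (fun _ => g i p.1) p.2) =
        fun p : X × X => g i p.1 * (Q i).indicator (fun _ => (1:ℝ≥0∞)) p.2 := by
      funext p
      by_cases hp : p.2 ∈ Q i <;> simp [Set.indicator_of_mem, Set.indicator_of_notMem, hp]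
    rw [this]
    exact ((hg i hi).comp measurable_fst).mul
      ((measurable_const.indicator (hQm i hi)).comp measurable_snd)
  have hGk : ∀ p : X × X, G p ≤ k p.1 p.2 := by
    intro p
    exact aux_sum_indicator_le t Q (fun i => g i p.1) hQd (fun y => k p.1 y)
      (fun i hi y hy => hgk i hi y hy p.1) p.2
  calc ∑ i ∈ t, (∫⁻ x, g i x ∂μ) * ν (Q i)
      = ∫⁻ y, ∑ i ∈ t, (Q i).indicator (fun _ => ∫⁻ x, g i x ∂μ) y ∂ν := by
        rw [lintegral_finset_sum]
        · refine Finset.sum_congr rfl fun i hi => ?_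
          rw [lintegral_indicator (hQm i hi)]
          simp [mul_comm]
        · exact fun i hi => measurable_const.indicator (hQm i hi)
    _ = ∫⁻ y, ∫⁻ x, G (x, y) ∂μ ∂ν := by
        refine lintegral_congr fun y => ?_
        rw [hG]
        simp only []
        rw [lintegral_finset_sum]
        · refine (Finset.sum_congr rfl fun i hi => ?_)
          by_cases hy : y ∈ Q i
          · simp only [Set.indicator_of_mem hy]
          · simp only [Set.indicator_of_notMem hy, lintegral_zero]
        · intro i hi
          by_cases hy : y ∈ Q i
          · simpa [Set.indicator_of_mem hy] using hg i hi
          · simp only [Set.indicator_of_notMem hy]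
            exact measurable_const
    _ = ∫⁻ p, G p ∂(μ.prod ν) := (lintegral_prod_symm G hGm.aemeasurable).symm
    _ ≤ energy k μ ν := lintegral_mono fun p => hGk p

lemma aux_energy_le_pot {X : Type*} [MeasurableSpace X]
    (k : X → X → ℝ≥0∞) (μ ν : Measure X) [SFinite μ] [SFinite ν] :
    energy k μ ν ≤ ∫⁻ y, pot k μ y ∂ν := by
  rw [energy, lintegral]
  refine iSup₂_le fun φ hφ => ?_
  calc φ.lintegral (μ.prod ν) = ∫⁻ p, φ p ∂(μ.prod ν) :=
        (φ.lintegral_eq_lintegral (μ.prod ν)).symm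
    _ = ∫⁻ y, ∫⁻ x, φ (x, y) ∂μ ∂ν := lintegral_prod_symm _ φ.measurable.aemeasurable
    _ ≤ ∫⁻ y, pot k μ y ∂ν := by
        refine lintegral_mono fun y => lintegral_mono fun x => ?_
        exact hφ (x, y)

lemma aux_exists_max {Y : Type*} [TopologicalSpace Y] [T2Space Y]
    (s : Finset ℝ≥0) (f : ℝ≥0 → Y → ℝ)
    (hc : ∀ a ∈ s, Continuous (f a)) (hcs : ∀ a ∈ s, HasCompactSupport (f a))
    (h0 : ∀ a ∈ s, ∀ x, 0 ≤ f a x) :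
    ∃ F : Y → ℝ, Continuous F ∧ HasCompactSupport F ∧ (∀ x, 0 ≤ F x) ∧
      (∀ a ∈ s, ∀ x, f a x ≤ F x) ∧ (∀ x, F x = 0 ∨ ∃ a ∈ s, F x = f a x) := by
  classical
  induction s using Finset.induction_on with
  | empty =>
      exact ⟨0, continuous_const, HasCompactSupport.zero, fun x => le_rfl,
        fun a ha => absurd ha (Finset.notMem_empty a), fun x => Or.inl rfl⟩
  | @insert a s ha ih =>
      obtain ⟨F', hF'c, hF'cs, hF'0, hF'ge, hF'att⟩ :=
        ih (fun a' ha' => hc a' (Finset.mem_insert_of_mem ha'))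
          (fun a' ha' => hcs a' (Finset.mem_insert_of_mem ha'))
          (fun a' ha' => h0 a' (Finset.mem_insert_of_mem ha'))
      have hfa := Finset.mem_insert_self a s
      refine ⟨fun x => max (f a x) (F' x), (hc a hfa).max hF'c, ?_, ?_, ?_, ?_⟩
      · apply HasCompactSupport.of_support_subset_isCompact ((hcs a hfa).union hF'cs)
        intro x hx
        simp only [Function.mem_support] at hx
        by_contra hmem
        simp only [Set.mem_union] at hmem
        push_neg at hmem
        have h1 : f a x = 0 := by
          by_contra h
          exact hmem.1 (subset_tsupport _ h)
        have h2 : F' x = 0 := by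
          by_contra h
          exact hmem.2 (subset_tsupport _ h)
        rw [h1, h2] at hx
        simp at hx
      · exact fun x => le_max_of_le_left (h0 a hfa x)
      · intro a' ha' x
        rcases Finset.mem_insert.1 ha' with rfl | ha's
        · exact le_max_left _ _
        · exact le_trans (hF'ge a' ha's x) (le_max_right _ _)
      · intro x
        rcases max_cases (f a x) (F' x) with ⟨heq, _⟩ | ⟨heq, _⟩
        · exact Or.inr ⟨a, hfa, heq⟩
        · rcases hF'att x with h | ⟨a', ha', h⟩
          · exact Or.inl (heq.trans h)
          · exact Or.inr ⟨a', Finset.mem_insert_of_mem ha', heq.trans h⟩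

lemma aux_key {X : Type*} [TopologicalSpace X] [MeasurableSpace X] [BorelSpace X]
    [T2Space X] [LocallyCompactSpace X] {k : X → X → ℝ≥0∞}
    (hk : LowerSemicontinuous fun p : X × X => k p.1 p.2)
    {μ : Measure X} [IsFiniteMeasure μ] (hreg : μ.InnerRegular)
    {r : ℝ≥0∞} (hr : r < ∫⁻ y, pot k μ y ∂μ) :
    ∃ f : X → ℝ, Continuous f ∧ HasCompactSupport f ∧ (∀ x, 0 ≤ f x) ∧
      (r < ∫⁻ y, ENNReal.ofReal (f y) ∂μ) ∧
      ∀ ν : Measure X, SFinite ν → ∫⁻ y, ENNReal.ofReal (f y) ∂ν ≤ energy k μ ν := by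
  classical
  obtain ⟨s, C, b, hCc, hCdisj, hClt, hCsum⟩ := aux_exists_compacts hreg hr
  -- rectangle data around each point of each C a
  have hrect : ∀ a ∈ s, ∀ y ∈ C a, ∃ V : Set X, IsOpen V ∧ y ∈ V ∧ ∃ g : X → ℝ≥0∞,
      Measurable g ∧ (∀ y' ∈ V, ∀ x, g x ≤ k x y') ∧ (b a : ℝ≥0∞) < ∫⁻ x, g x ∂μ :=
    fun a ha y hy => aux_rect hk hreg (hClt a ha y hy)
  choose! V hVo hyV g hgm hgk hgint using hrect
  -- finite subcovers
  have hcover : ∀ a ∈ s, ∃ t : Finset X, (∀ y ∈ t, y ∈ C a) ∧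
      C a ⊆ ⋃ y ∈ t, V a y := by
    intro a ha
    obtain ⟨t, ht⟩ := (hCc a ha).elim_nhds_subcover' (fun y hy => V a y)
      (fun y hy => (hVo a ha y hy).mem_nhds (hyV a ha y hy))
    refine ⟨t.image Subtype.val, fun y hy => ?_, fun x hx => ?_⟩
    · obtain ⟨y', _, rfl⟩ := Finset.mem_image.1 hy
      exact y'.2
    · obtain ⟨y', hy't, hxV⟩ := Set.mem_iUnion₂.1 (ht hx)
      exact Set.mem_biUnion (Finset.mem_image_of_mem Subtype.val hy't) hxV
  choose! t ht_mem ht_cover using hcover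
  -- separating opens
  obtain ⟨O, hOo, hCO, hOdisj⟩ := aux_sep s C hCc hCdisj
  -- U a : open superset of C a
  set U : ℝ≥0 → Set X := fun a => (⋃ y ∈ t a, V a y) ∩ O a with hU
  have hUo : ∀ a ∈ s, IsOpen (U a) := fun a ha =>
    ((isOpen_biUnion fun y hy => hVo a ha y (ht_mem a ha y hy)).inter (hOo a ha))
  have hCU : ∀ a ∈ s, C a ⊆ U a := fun a ha =>
    Set.subset_inter (ht_cover a ha) (hCO a ha)
  have hUdisj : ∀ a ∈ s, ∀ a' ∈ s, a ≠ a' → Disjoint (U a) (U a') := fun a ha a' ha' hne =>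
    Set.disjoint_of_subset Set.inter_subset_right Set.inter_subset_right
      (hOdisj a ha a' ha' hne)
  -- Urysohn functions
  have hUry : ∀ a ∈ s, ∃ fa : X → ℝ, Continuous fa ∧ HasCompactSupport fa ∧
      (∀ x, fa x ∈ Set.Icc (0:ℝ) 1) ∧ (∀ x ∈ C a, fa x = 1) ∧
      (∀ x, fa x ≠ 0 → x ∈ U a) := by
    intro a ha
    obtain ⟨fa, hfa1, hfa0, hfacs, hfaIcc⟩ :=
      exists_continuous_one_zero_of_isCompact (hCc a ha) (hUo a ha).isClosed_compl
        (Set.disjoint_compl_right_iff_subset.mpr (hCU a ha))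
    refine ⟨fa, fa.continuous, hfacs, hfaIcc, fun x hx => hfa1 hx, fun x hx => ?_⟩
    by_contra hmem
    exact hx (hfa0 hmem)
  choose! fa hfac hfacs hfaIcc hfa1 hfaU using hUry
  -- max function
  obtain ⟨F, hFc, hFcs, hF0, hFge, hFatt⟩ := aux_exists_max s (fun a x => (b a : ℝ) * fa a x)
    (fun a ha => continuous_const.mul (hfac a ha))
    (fun a ha => (hfacs a ha).mul_left)
    (fun a ha x => mul_nonneg (b a).2 (hfaIcc a ha x).1)
  refine ⟨F, hFc, hFcs, hF0, ?_, ?_⟩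
  · -- r < ∫⁻ ofReal F dμ
    refine lt_of_lt_of_le hCsum ?_
    refine aux_sum_le_lintegral μ s C b hCc hCdisj _ fun a ha x hx => ?_
    have h1 : (b a : ℝ) * fa a x = (b a : ℝ) := by rw [hfa1 a ha x hx, mul_one]
    calc (b a : ℝ≥0∞) = ENNReal.ofReal ((b a : ℝ) * fa a x) := by
          rw [h1]; exact ENNReal.ofReal_coe_nnreal.symm
      _ ≤ ENNReal.ofReal (F x) := ENNReal.ofReal_le_ofReal (hFge a ha x)
  · -- ∀ ν, ∫⁻ ofReal F dν ≤ energy k μ ν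
    intro ν hν
    haveI := hν
    -- enumeration data
    set n : ℝ≥0 → ℕ := fun a => (t a).card with hn
    set N : ℕ := s.sup n with hN
    set VV : ℝ≥0 → ℕ → Set X := fun a i =>
      if h : i < n a then V a (((t a).equivFin.symm ⟨i, h⟩ : {x // x ∈ t a}) : X) else ∅
      with hVV
    set GG : ℝ≥0 → ℕ → X → ℝ≥0∞ := fun a i =>
      if h : i < n a then g a (((t a).equivFin.symm ⟨i, h⟩ : {x // x ∈ t a}) : X)
      else fun _ => 0 with hGG
    set Q : ℝ≥0 × ℕ → Set X := fun p =>
      (U p.1 ∩ VV p.1 p.2) \ ⋃ i' ∈ Finset.range p.2, VV p.1 i' with hQ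
    set T : Finset (ℝ≥0 × ℕ) := s ×ˢ Finset.range N with hT
    have hVVm : ∀ a ∈ s, ∀ i : ℕ, MeasurableSet (VV a i) := by
      intro a ha i
      simp only [hVV]
      by_cases h : i < n a
      · simp only [dif_pos h]
        exact (hVo a ha _ (ht_mem a ha _ (Finset.coe_mem _))).measurableSet
      · simp only [dif_neg h]
        exact MeasurableSet.empty
    have hQm : ∀ p ∈ T, MeasurableSet (Q p) := by
      rintro ⟨a, i⟩ hp
      have ha : a ∈ s := (Finset.mem_product.1 hp).1
      refine MeasurableSet.diff ?_ ?_
      · exact ((hUo a ha).measurableSet).inter (hVVm a ha i)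
      · exact MeasurableSet.biUnion (Finset.range i).countable_toSet
          (fun i' _ => hVVm a ha i')
    have hQd : ∀ p ∈ T, ∀ p' ∈ T, p ≠ p' → Disjoint (Q p) (Q p') := by
      rintro ⟨a, i⟩ hp ⟨a', i'⟩ hp' hne
      have ha : a ∈ s := (Finset.mem_product.1 hp).1
      have ha' : a' ∈ s := (Finset.mem_product.1 hp').1
      rcases eq_or_ne a a' with rfl | hane
      · have hine : i ≠ i' := by
          intro h
          exact hne (by rw [h])
        rcases lt_or_gt_of_ne hine with hlt | hlt
        · -- i < i' : Q (a, i') excludes VV a i ⊇ Q (a,i)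
          refine Set.disjoint_left.2 fun x hx hx' => ?_
          have h1 : x ∈ VV a i := hx.1.2
          have h2 : x ∉ VV a i := by
            have := hx'.2
            simp only [Set.mem_iUnion] at this
            push_neg at this
            exact this i (by simpa using hlt)
          exact h2 h1
        · refine Set.disjoint_left.2 fun x hx hx' => ?_
          have h1 : x ∈ VV a i' := hx'.1.2
          have h2 : x ∉ VV a i' := by
            have := hx.2
            simp only [Set.mem_iUnion] at this
            push_neg at this
            exact this i' (by simpa using hlt)
          exact h2 h1
      · exact Set.disjoint_of_subset (fun x hx => hx.1.1) (fun x hx => hx.1.1)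
          (hUdisj a ha a' ha' hane)
    have hGGm : ∀ p ∈ T, Measurable (GG p.1 p.2) := by
      rintro ⟨a, i⟩ hp
      have ha : a ∈ s := (Finset.mem_product.1 hp).1
      simp only [hGG]
      by_cases h : i < n a
      · simp only [dif_pos h]
        exact hgm a ha _ (ht_mem a ha _ (Finset.coe_mem _))
      · simp only [dif_neg h]
        exact measurable_const
    have hGGk : ∀ p ∈ T, ∀ y ∈ Q p, ∀ x, GG p.1 p.2 x ≤ k x y := by
      rintro ⟨a, i⟩ hp y hy x
      have ha : a ∈ s := (Finset.mem_product.1 hp).1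
      have hyVV : y ∈ VV a i := hy.1.2
      by_cases h : i < n a
      · have hmem := ht_mem a ha _ (Finset.coe_mem ((t a).equivFin.symm ⟨i, h⟩))
        simp only [hGG]
        simp only [dif_pos h]
        refine hgk a ha _ hmem y ?_ x
        simp only [hVV] at hyVV
        simpa only [dif_pos h] using hyVV
      · simp only [hVV] at hyVV
        simp only [dif_neg h] at hyVV
        exact absurd hyVV (Set.notMem_empty y)
    have hGGint : ∀ p ∈ T, Q p ≠ ∅ → (b p.1 : ℝ≥0∞) ≤ ∫⁻ x, GG p.1 p.2 x ∂μ := by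
      rintro ⟨a, i⟩ hp hQne
      have ha : a ∈ s := (Finset.mem_product.1 hp).1
      by_cases h : i < n a
      · have hmem := ht_mem a ha _ (Finset.coe_mem ((t a).equivFin.symm ⟨i, h⟩))
        simp only [hGG]
        simp only [dif_pos h]
        exact (hgint a ha _ hmem).le
      · exfalso
        apply hQne
        simp only [hQ, hVV]
        simp only [dif_neg h]
        simp
    -- pointwise bound
    have hpt : ∀ y, ENNReal.ofReal (F y) ≤
        ∑ p ∈ T, (Q p).indicator (fun _ => (b p.1 : ℝ≥0∞)) y := by
      intro y
      rcases eq_or_ne (F y) 0 with hFy | hFy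
      · rw [hFy]
        simp
      rcases hFatt y with h | ⟨a, ha, hFa⟩
      · exact absurd h hFy
      have hfane : fa a y ≠ 0 := by
        intro h
        apply hFy
        rw [hFa, h, mul_zero]
      have hyU : y ∈ U a := hfaU a ha y hfane
      have hFb : ENNReal.ofReal (F y) ≤ (b a : ℝ≥0∞) := by
        rw [hFa]
        calc ENNReal.ofReal ((b a : ℝ) * fa a y) ≤ ENNReal.ofReal ((b a : ℝ) * 1) := by
              apply ENNReal.ofReal_le_ofReal
              exact mul_le_mul_of_nonneg_left (hfaIcc a ha y).2 (b a).2
          _ = (b a : ℝ≥0∞) := by rw [mul_one]; exact ENNReal.ofReal_coe_nnreal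
      -- find minimal index
      have hyUnion : y ∈ ⋃ w ∈ t a, V a w := hyU.1
      obtain ⟨w, hwt, hyVw⟩ := Set.mem_iUnion₂.1 hyUnion
      set I : Finset (Fin (n a)) :=
        Finset.univ.filter (fun i => y ∈ VV a (i : ℕ)) with hI
      have hInemp : I.Nonempty := by
        refine ⟨(t a).equivFin ⟨w, hwt⟩, ?_⟩
        simp only [hI, Finset.mem_filter]
        refine ⟨Finset.mem_univ _, ?_⟩
        simp only [hVV]
        have hval : ((t a).equivFin ⟨w, hwt⟩ : Fin (n a)).val < n a := Fin.is_lt _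
        simp only [dif_pos hval]
        have : (t a).equivFin.symm ⟨((t a).equivFin ⟨w, hwt⟩ : Fin (n a)).val, hval⟩ =
            ⟨w, hwt⟩ := by
          rw [Fin.eta]
          exact Equiv.symm_apply_apply _ _
        rw [this]
        exact hyVw
      set i₀ : Fin (n a) := I.min' hInemp with hi₀
      have hyVi₀ : y ∈ VV a (i₀ : ℕ) := by
        have := I.min'_mem hInemp
        simp only [hI, Finset.mem_filter] at this
        exact this.2
      have hymin : ∀ i' : ℕ, i' < (i₀ : ℕ) → y ∉ VV a i' := by
        intro i' hi' hyVi'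
        have hi'lt : i' < n a := lt_trans hi' (Fin.is_lt i₀)
        have : (⟨i', hi'lt⟩ : Fin (n a)) ∈ I := by
          simp only [hI, Finset.mem_filter]
          exact ⟨Finset.mem_univ _, hyVi'⟩
        have := I.min'_le _ this
        rw [← hi₀] at this
        exact absurd (lt_of_le_of_lt this (by exact_mod_cast hi')) (lt_irrefl _)
      have hyQ : y ∈ Q (a, (i₀ : ℕ)) := by
        simp only [hQ]
        refine ⟨⟨hyU, hyVi₀⟩, ?_⟩
        intro hmem
        rw [Set.mem_iUnion₂] at hmem
        obtain ⟨i', hi', hyVi'⟩ := hmem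
        exact hymin i' (Finset.mem_range.1 hi') hyVi'
      have hpT : (a, (i₀ : ℕ)) ∈ T := by
        simp only [hT, Finset.mem_product]
        refine ⟨ha, Finset.mem_range.2 ?_⟩
        calc (i₀ : ℕ) < n a := Fin.is_lt _
          _ ≤ N := Finset.le_sup ha
      calc ENNReal.ofReal (F y) ≤ (b a : ℝ≥0∞) := hFb
        _ = (Q (a, (i₀ : ℕ))).indicator (fun _ => (b a : ℝ≥0∞)) y := by
            rw [Set.indicator_of_mem hyQ]
        _ ≤ ∑ p ∈ T, (Q p).indicator (fun _ => (b p.1 : ℝ≥0∞)) y := by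
            exact Finset.single_le_sum
              (f := fun p => (Q p).indicator (fun _ => (b p.1 : ℝ≥0∞)) y)
              (fun p _ => zero_le) hpT
    -- combine
    calc ∫⁻ y, ENNReal.ofReal (F y) ∂ν
        ≤ ∫⁻ y, ∑ p ∈ T, (Q p).indicator (fun _ => (b p.1 : ℝ≥0∞)) y ∂ν :=
          lintegral_mono hpt
      _ = ∑ p ∈ T, (b p.1 : ℝ≥0∞) * ν (Q p) := by
          rw [lintegral_finset_sum]
          · refine Finset.sum_congr rfl fun p hp => ?_
            rw [lintegral_indicator (hQm p hp)]
            simp [mul_comm]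
          · exact fun p hp => measurable_const.indicator (hQm p hp)
      _ ≤ ∑ p ∈ T, (∫⁻ x, GG p.1 p.2 x ∂μ) * ν (Q p) := by
          refine Finset.sum_le_sum fun p hp => ?_
          rcases eq_or_ne (Q p) ∅ with hQe | hQne
          · rw [hQe]
            simp
          · exact mul_le_mul_left (hGGint p hp hQne) _
      _ ≤ energy k μ ν :=
          aux_prod_lb T Q (fun p => GG p.1 p.2) hQm hQd hGGm hGGk

lemma aux_inj {X : Type*} [TopologicalSpace X] [MeasurableSpace X] [BorelSpace X]
    [T2Space X] [LocallyCompactSpace X] {μ ν : Measure X} [IsFiniteMeasure μ]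
    [IsFiniteMeasure ν] (hμo : μ.OuterRegular) (hνo : ν.OuterRegular)
    (hμi : μ.InnerRegular) (hνi : ν.InnerRegular)
    (h : ∀ f : X → ℝ, Continuous f → HasCompactSupport f → ∫ x, f x ∂μ = ∫ x, f x ∂ν) :
    μ = ν := by
  -- equal on compacts
  have hcompact : ∀ K : Set X, IsCompact K → μ K = ν K := by
    have key : ∀ (μ' ν' : Measure X), IsFiniteMeasure μ' → IsFiniteMeasure ν' →
        ν'.OuterRegular →
        (∀ f : X → ℝ, Continuous f → HasCompactSupport f → ∫ x, f x ∂μ' = ∫ x, f x ∂ν') →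
        ∀ K : Set X, IsCompact K → μ' K ≤ ν' K := by
      intro μ' ν' hμ'f hν'f hν'o h' K hK
      rw [Set.measure_eq_iInf_isOpen K ν']
      refine le_iInf fun U => le_iInf fun hKU => le_iInf fun hU => ?_
      obtain ⟨f, hf1, hf0, hfcs, hfIcc⟩ :=
        exists_continuous_one_zero_of_isCompact hK hU.isClosed_compl
          (Set.disjoint_compl_right_iff_subset.mpr hKU)
      haveI := hμ'f
      haveI := hν'f
      have hfint_μ : Integrable f μ' := f.continuous.integrable_of_hasCompactSupport hfcs
      have hfint_ν : Integrable f ν' := f.continuous.integrable_of_hasCompactSupport hfcs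
      have h1 : μ' K ≤ ∫⁻ x, ENNReal.ofReal (f x) ∂μ' := by
        have : ∀ x, K.indicator (fun _ => (1:ℝ≥0∞)) x ≤ ENNReal.ofReal (f x) := by
          intro x
          by_cases hx : x ∈ K
          · simp [Set.indicator_of_mem hx, hf1 hx]
          · simp [Set.indicator_of_notMem hx]
        calc μ' K = ∫⁻ x, K.indicator (fun _ => (1:ℝ≥0∞)) x ∂μ' := by
              rw [lintegral_indicator hK.isClosed.measurableSet]; simp
          _ ≤ _ := lintegral_mono this
      have h2 : ∫⁻ x, ENNReal.ofReal (f x) ∂ν' ≤ ν' U := by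
        have : ∀ x, ENNReal.ofReal (f x) ≤ U.indicator (fun _ => (1:ℝ≥0∞)) x := by
          intro x
          by_cases hx : x ∈ U
          · simp only [Set.indicator_of_mem hx]
            calc ENNReal.ofReal (f x) ≤ ENNReal.ofReal 1 :=
                  ENNReal.ofReal_le_ofReal (hfIcc x).2
              _ = 1 := by simp
          · have : f x = 0 := hf0 hx
            simp [this]
        calc ∫⁻ x, ENNReal.ofReal (f x) ∂ν' ≤ ∫⁻ x, U.indicator (fun _ => (1:ℝ≥0∞)) x ∂ν' :=
              lintegral_mono this
          _ = ν' U := by rw [lintegral_indicator hU.measurableSet]; simp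
      have h3 : ∫⁻ x, ENNReal.ofReal (f x) ∂μ' = ∫⁻ x, ENNReal.ofReal (f x) ∂ν' := by
        rw [← ofReal_integral_eq_lintegral_ofReal hfint_μ
            (Filter.Eventually.of_forall fun x => (hfIcc x).1),
          ← ofReal_integral_eq_lintegral_ofReal hfint_ν
            (Filter.Eventually.of_forall fun x => (hfIcc x).1),
          h' f f.continuous hfcs]
      exact h1.trans (h3.le.trans h2)
    intro K hK
    exact le_antisymm (key μ ν inferInstance inferInstance hνo h K hK)
      (key ν μ inferInstance inferInstance hμo (fun f hf hfc => (h f hf hfc).symm) K hK)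
  -- conclude by inner regularity
  ext A hA
  rw [hμi.innerRegular.measure_eq_iSup hA, hνi.innerRegular.measure_eq_iSup hA]
  congr 1
  ext K
  congr 1
  ext hKA
  congr 1
  ext hKc
  exact hcompact K hKc

def CcF (X : Type*) [TopologicalSpace X] : Type _ :=
  {f : X → ℝ // Continuous f ∧ HasCompactSupport f}

def PhiM {X : Type*} [TopologicalSpace X] [MeasurableSpace X] (μ : Measure X) :
    CcF X → ℝ := fun g => ∫ x, g.1 x ∂μ

lemma vague_eq (X : Type*) [TopologicalSpace X] [MeasurableSpace X] :
    vagueTop X = TopologicalSpace.induced (PhiM (X := X)) Pi.topologicalSpace := by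
  rw [vagueTop, Pi.topologicalSpace, induced_iInf]
  erw [iInf_subtype]
  refine iInf_congr fun f => ?_
  rw [iInf_and]
  refine iInf_congr fun hc => iInf_congr fun hcs => ?_
  rw [induced_compose]
  rfl

/-- The map `PhiM` is affine on finite measures. -/
lemma phi_affine {X : Type*} [TopologicalSpace X] [MeasurableSpace X] [BorelSpace X]
    (μ₁ μ₂ : Measure X) [IsFiniteMeasure μ₁] [IsFiniteMeasure μ₂]
    {a b : ℝ≥0∞} (ha : a ≠ ⊤) (hb : b ≠ ⊤) :
    PhiM (a • μ₁ + b • μ₂) = a.toReal • PhiM μ₁ + b.toReal • PhiM μ₂ := by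
  funext g
  obtain ⟨f, hfc, hfcs⟩ := g
  have h1 : Integrable f μ₁ := hfc.integrable_of_hasCompactSupport hfcs
  have h2 : Integrable f μ₂ := hfc.integrable_of_hasCompactSupport hfcs
  simp only [PhiM, Pi.add_apply, Pi.smul_apply, smul_eq_mul]
  rw [integral_add_measure (h1.smul_measure ha) (h2.smul_measure hb),
    integral_smul_measure, integral_smul_measure]
  simp [smul_eq_mul]
  rfl

end AuxLemmas

open NNReal Set in
/-- Lemma 6: for a `w*`-compact convex `R(H)` on a compact set `H`
and a positive l.s.c. kernel, `w(R(H)) ≤ q(R(H))`. -/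
theorem statement10 {X : Type*} [TopologicalSpace X] [MeasurableSpace X] [BorelSpace X]
    [LocallyCompactSpace X] [T2Space X]
    (k : X → X → ℝ≥0∞) (hk : LowerSemicontinuous fun p : X × X => k p.1 p.2)
    (H : Set X) (hH : IsCompact H)
    (R : Set (Measure X)) (hR : R ⊆ MM H) (hRc : VCompact R) (hRconv : ConvexM R) :
    ww k R ≤ qup k R (ExtremePts R) := by
  classical
  letI : TopologicalSpace (Measure X) := vagueTop X
  -- Φ is continuous and its image is compact and convex
  have hΦcont : Continuous (PhiM (X := X)) := by
    rw [continuous_iff_le_induced, ← vague_eq X]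
  have hΦRcomp : IsCompact (PhiM '' R) := hRc.image hΦcont
  have hΦRconv : Convex ℝ (PhiM '' R) := by
    rintro x ⟨μ₁, hμ₁, rfl⟩ y ⟨μ₂, hμ₂, rfl⟩ a b ha hb hab
    haveI := (hR hμ₁).1
    haveI := (hR hμ₂).1
    refine ⟨ENNReal.ofReal a • μ₁ + ENNReal.ofReal b • μ₂,
      hRconv μ₁ hμ₁ μ₂ hμ₂ _ _ (by
        rw [← ENNReal.ofReal_add ha hb, hab, ENNReal.ofReal_one]), ?_⟩
    rw [phi_affine μ₁ μ₂ ENNReal.ofReal_ne_top ENNReal.ofReal_ne_top,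
      ENNReal.toReal_ofReal ha, ENNReal.toReal_ofReal hb]
  -- Krein–Milman
  have hKM : closure (convexHull ℝ ((PhiM '' R).extremePoints ℝ)) = PhiM '' R :=
    closure_convexHull_extremePoints hΦRcomp hΦRconv
  -- injectivity of PhiM on R
  have hinj : ∀ μ ∈ R, ∀ ν ∈ R, PhiM μ = PhiM ν → μ = ν := by
    intro μ hμ ν hν hEq
    haveI := (hR hμ).1
    haveI := (hR hν).1
    refine aux_inj (hR hμ).2.1.toOuterRegular (hR hν).2.1.toOuterRegular
      (hR hμ).2.2.1 (hR hν).2.2.1 fun f hfc hfcs => ?_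
    have := congrFun hEq ⟨f, hfc, hfcs⟩
    exact this
  -- extreme point transfer
  have hext : ∀ e ∈ (PhiM '' R).extremePoints ℝ, ∃ ν ∈ ExtremePts R, PhiM ν = e := by
    rintro e ⟨⟨ν, hνR, rfl⟩, hexte⟩
    refine ⟨ν, ⟨hνR, ?_⟩, rfl⟩
    intro μ₁ hμ₁ μ₂ hμ₂ a b ha hb hab hνeq
    have hane : a ≠ ⊤ := by
      intro h
      rw [h] at hab
      simp at hab
    have hbne : b ≠ ⊤ := by
      intro h
      rw [h] at hab
      simp [add_comm] at hab
    haveI := (hR hμ₁).1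
    haveI := (hR hμ₂).1
    have hΦν : PhiM ν = a.toReal • PhiM μ₁ + b.toReal • PhiM μ₂ := by
      rw [hνeq]
      exact phi_affine μ₁ μ₂ hane hbne
    have hsum : a.toReal + b.toReal = 1 := by
      rw [← ENNReal.toReal_add hane hbne, hab, ENNReal.toReal_one]
    have hmem : PhiM ν ∈ openSegment ℝ (PhiM μ₁) (PhiM μ₂) :=
      ⟨a.toReal, b.toReal, ENNReal.toReal_pos ha.ne' hane,
        ENNReal.toReal_pos hb.ne' hbne, hsum, hΦν.symm⟩
    obtain ⟨h₁, h₂⟩ := (mem_extremePoints.1 (show PhiM ν ∈ (PhiM '' R).extremePoints ℝ from ⟨⟨ν, hνR, rfl⟩, hexte⟩)).2 _ ⟨μ₁, hμ₁, rfl⟩ _ ⟨μ₂, hμ₂, rfl⟩ hmem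
    exact ⟨(hinj μ₁ hμ₁ ν hνR h₁).symm, (hinj μ₂ hμ₂ ν hνR h₂).symm⟩
  -- main pointwise estimate
  rw [ww, qup]
  refine iInf_mono fun μ => iInf_mono fun hμ => ?_
  haveI : IsFiniteMeasure μ := (hR hμ).1
  refine le_of_forall_lt fun r hr => ?_
  have hr2 : r < ∫⁻ y, pot k μ y ∂μ := hr.trans_le (aux_energy_le_pot k μ μ)
  obtain ⟨f, hfc, hfcs, hf0, hfint, hfub⟩ := aux_key hk (hR hμ).2.2.1 hr2
  have hInt : Integrable f μ := hfc.integrable_of_hasCompactSupport hfcs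
  have hoi : ENNReal.ofReal (∫ x, f x ∂μ) = ∫⁻ x, ENNReal.ofReal (f x) ∂μ :=
    ofReal_integral_eq_lintegral_ofReal hInt (Filter.Eventually.of_forall hf0)
  set I := ∫ x, f x ∂μ with hI
  have hrI : r < ENNReal.ofReal I := by rw [hoi]; exact hfint
  have hrtop : r ≠ ⊤ := (hrI.trans ENNReal.ofReal_lt_top).ne
  have hrIlt : r.toReal < I := (ENNReal.lt_ofReal_iff_toReal_lt hrtop).1 hrI
  set c : ℝ := (r.toReal + I) / 2 with hc
  have hrc : r < ENNReal.ofReal c := by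
    rw [ENNReal.lt_ofReal_iff_toReal_lt hrtop, hc]
    linarith
  have hcI : c < I := by
    rw [hc]
    linarith
  have hI0 : 0 < I := by
    by_contra h
    push_neg at h
    rw [ENNReal.ofReal_eq_zero.2 h] at hrI
    simp at hrI
  have hc0 : 0 < c := by
    have := ENNReal.toReal_nonneg (a := r)
    rw [hc]
    linarith
  -- Krein–Milman approximation
  have hΦμ : PhiM μ ∈ closure (convexHull ℝ ((PhiM '' R).extremePoints ℝ)) := by
    rw [hKM]
    exact ⟨μ, hμ, rfl⟩
  have hVopen : IsOpen {x : CcF X → ℝ | c < x ⟨f, hfc, hfcs⟩} :=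
    isOpen_lt continuous_const (continuous_apply _)
  have hΦμV : PhiM μ ∈ {x : CcF X → ℝ | c < x ⟨f, hfc, hfcs⟩} := hcI
  obtain ⟨z, hzV, hzhull⟩ := mem_closure_iff.1 hΦμ _ hVopen hΦμV
  rw [convexHull_eq] at hzhull
  obtain ⟨ι, tt, w, p, hw0, hw1, hpmem, hzc⟩ := hzhull
  have hzval : c < z ⟨f, hfc, hfcs⟩ := hzV
  have hzsum : z ⟨f, hfc, hfcs⟩ = ∑ i ∈ tt, w i * p i ⟨f, hfc, hfcs⟩ := by
    rw [← hzc, Finset.centerMass_eq_of_sum_1 _ _ hw1]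
    erw [Finset.sum_apply]
    rfl
  have hex : ∃ i ∈ tt, c < p i ⟨f, hfc, hfcs⟩ := by
    by_contra hcon
    push_neg at hcon
    have : z ⟨f, hfc, hfcs⟩ ≤ c := by
      rw [hzsum]
      calc ∑ i ∈ tt, w i * p i ⟨f, hfc, hfcs⟩ ≤ ∑ i ∈ tt, w i * c :=
            Finset.sum_le_sum fun i hi =>
              mul_le_mul_of_nonneg_left (hcon i hi) (hw0 i hi)
        _ = c := by rw [← Finset.sum_mul, hw1, one_mul]
    exact absurd hzval (not_lt.2 this)
  obtain ⟨i, hit, hci⟩ := hex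
  obtain ⟨ν, hνext, hνeq⟩ := hext (p i) (hpmem i hit)
  have hνR : ν ∈ R := hνext.1
  haveI : IsFiniteMeasure ν := (hR hνR).1
  have hIntν : Integrable f ν := hfc.integrable_of_hasCompactSupport hfcs
  have hcν : c < ∫ x, f x ∂ν := by
    have : PhiM ν ⟨f, hfc, hfcs⟩ = ∫ x, f x ∂ν := rfl
    rw [← this, hνeq]
    exact hci
  have hfinal : ENNReal.ofReal c < energy k μ ν := by
    calc ENNReal.ofReal c < ENNReal.ofReal (∫ x, f x ∂ν) := by
          rw [ENNReal.ofReal_lt_ofReal_iff (lt_trans hc0 hcν)]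
          · exact hcν
      _ = ∫⁻ x, ENNReal.ofReal (f x) ∂ν :=
          ofReal_integral_eq_lintegral_ofReal hIntν (Filter.Eventually.of_forall hf0)
      _ ≤ energy k μ ν := hfub ν inferInstance
  have : energy k μ ν ≤ ⨆ ν' ∈ ExtremePts R, energy k μ ν' := by
    exact le_iSup₂ (f := fun ν' (_ : ν' ∈ ExtremePts R) => energy k μ ν') ν hνext
  exact lt_of_lt_of_le (hrc.trans hfinal) this


end
end

section
/- Let R(H) ⊆ M(H) be convex, S(L) ⊆ M(L), and R_n(H) = {μ ∈ R(H) : card(supp μ) ≤ n}. Then for all m, n ≥ 1, q̲(R_{m+n}(H), S(L)) ≥ (m/(m+n)) · q̲(R_m(H), S(L)) + (n/(m+n)) · q̲(R_n(H), S(L)); consequently the sequence n ↦ q̲(R_n(H), S(L)) is quasi-increasing and converges (in the extended reals) as n → ∞. -/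
open MeasureTheory Topology Filter ENNReal

noncomputable section

section Aux

variable {X Y : Type*} [MeasurableSpace X] [MeasurableSpace Y]

lemma Rn_mono {X : Type*} [TopologicalSpace X] [MeasurableSpace X]
    (R : Set (Measure X)) {m n : ℕ} (h : m ≤ n) : Rn R m ⊆ Rn R n := by
  rintro μ ⟨hμ, s, hs, hc⟩
  exact ⟨hμ, s, hs, hc.trans h⟩

lemma qlow_mono_left (k : X → Y → ℝ≥0∞) {R₁ R₂ : Set (Measure X)} (S : Set (Measure Y))
    (h : R₁ ⊆ R₂) : qlow k R₁ S ≤ qlow k R₂ S := by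
  refine iSup_le fun μ => iSup_le fun hμ => ?_
  exact le_iSup₂ (f := fun (μ : Measure X) (_ : μ ∈ R₂) => ⨅ ν ∈ S, energy k μ ν) μ (h hμ)

lemma msupp_add {X : Type*} [TopologicalSpace X] [MeasurableSpace X] (μ ν : Measure X) :
    msupp (μ + ν) ⊆ msupp μ ∪ msupp ν := by
  intro x hx
  by_contra h
  simp only [Set.mem_union, msupp, Set.mem_setOf_eq, not_or, not_forall, not_lt,
    nonpos_iff_eq_zero] at h
  obtain ⟨⟨U, hU, hU0⟩, ⟨V, hV, hV0⟩⟩ := h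
  have h1 : 0 < (μ + ν) (U ∩ V) := hx (U ∩ V) (Filter.inter_mem hU hV)
  have h2 : μ (U ∩ V) = 0 :=
    le_antisymm ((measure_mono Set.inter_subset_left).trans hU0.le) zero_le
  have h3 : ν (U ∩ V) = 0 :=
    le_antisymm ((measure_mono Set.inter_subset_right).trans hV0.le) zero_le
  rw [Measure.add_apply, h2, h3] at h1
  simp at h1

lemma msupp_smul {X : Type*} [TopologicalSpace X] [MeasurableSpace X] (c : ℝ≥0∞) (μ : Measure X) :
    msupp (c • μ) ⊆ msupp μ := by
  intro x hx U hU
  have := hx U hU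
  rw [Measure.smul_apply, smul_eq_mul] at this
  rcases eq_or_ne (μ U) 0 with h | h
  · simp [h] at this
  · exact pos_iff_ne_zero.mpr h

lemma smul_prod' (c : ℝ≥0∞) (μ : Measure X) (σ : Measure Y) [SFinite σ] :
    (c • μ).prod σ = c • μ.prod σ := by
  ext s hs
  rw [Measure.smul_apply, smul_eq_mul, Measure.prod_apply hs, Measure.prod_apply hs,
    lintegral_smul_measure, smul_eq_mul]

lemma energy_lin (k : X → Y → ℝ≥0∞) (μ ν : Measure X) (σ : Measure Y) [SFinite σ]
    (a b : ℝ≥0∞) :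
    energy k (a • μ + b • ν) σ = a * energy k μ σ + b * energy k ν σ := by
  have hprod : (a • μ + b • ν).prod σ = a • μ.prod σ + b • ν.prod σ := by
    ext s hs
    rw [Measure.prod_apply hs, Measure.add_apply, lintegral_add_measure,
      lintegral_smul_measure, lintegral_smul_measure, Measure.smul_apply,
      Measure.smul_apply, smul_eq_mul, smul_eq_mul, Measure.prod_apply hs,
      Measure.prod_apply hs, smul_eq_mul, smul_eq_mul]
  rw [energy, hprod, lintegral_add_measure, lintegral_smul_measure, lintegral_smul_measure]
  rfl

end Aux

/-- superadditivity of the Chebyshev constants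
`q̲(R_{m+n}(H), S(L)) ≥ (m/(m+n)) q̲(R_m(H), S(L)) + (n/(m+n)) q̲(R_n(H), S(L))`,
hence the sequence of Chebyshev constants converges in the extended reals. -/
theorem statement14 {X Y : Type*} [TopologicalSpace X] [MeasurableSpace X] [BorelSpace X]
    [LocallyCompactSpace X] [T2Space X]
    [TopologicalSpace Y] [MeasurableSpace Y] [BorelSpace Y]
    [LocallyCompactSpace Y] [T2Space Y]
    (k : X → Y → ℝ≥0∞) (hk : LowerSemicontinuous fun p : X × Y => k p.1 p.2)
    (H : Set X) (L : Set Y)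
    (R : Set (Measure X)) (S : Set (Measure Y))
    (hR : R ⊆ MM H) (hRconv : ConvexM R) (hS : S ⊆ MM L) :
    (∀ m n : ℕ, 1 ≤ m → 1 ≤ n →
      (m : ℝ≥0∞) / ((m : ℝ≥0∞) + (n : ℝ≥0∞)) * qlow k (Rn R m) S +
        (n : ℝ≥0∞) / ((m : ℝ≥0∞) + (n : ℝ≥0∞)) * qlow k (Rn R n) S ≤
      qlow k (Rn R (m + n)) S) ∧
    ∃ l : ℝ≥0∞, Filter.Tendsto (fun n => qlow k (Rn R n) S) Filter.atTop (𝓝 l) := by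
  constructor
  · intro m n hm hn
    have hm0 : (m : ℝ≥0∞) ≠ 0 := Nat.cast_ne_zero.mpr (by omega)
    have hmn0 : ((m : ℝ≥0∞) + n) ≠ 0 := by
      intro h
      exact hm0 (add_eq_zero.mp h).1
    have hmntop : ((m : ℝ≥0∞) + n) ≠ ⊤ := by
      simp [ENNReal.add_ne_top]
    set a : ℝ≥0∞ := (m : ℝ≥0∞) / ((m : ℝ≥0∞) + n) with ha
    set b : ℝ≥0∞ := (n : ℝ≥0∞) / ((m : ℝ≥0∞) + n) with hb
    have hab : a + b = 1 := by
      rw [ha, hb, ENNReal.div_add_div_same, ENNReal.div_self hmn0 hmntop]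
    have ha1 : a ≤ 1 := hab ▸ le_self_add
    have hb1 : b ≤ 1 := hab ▸ le_add_self
    have key : ∀ μ ∈ Rn R m, ∀ ν ∈ Rn R n,
        a * (⨅ σ ∈ S, energy k μ σ) + b * (⨅ σ ∈ S, energy k ν σ)
          ≤ qlow k (Rn R (m + n)) S := by
      classical
      rintro μ ⟨hμR, s, hsμ, hcs⟩ ν ⟨hνR, t, htν, hct⟩
      have hmem : a • μ + b • ν ∈ Rn R (m + n) := by
        refine ⟨hRconv μ hμR ν hνR a b hab, s ∪ t, ?_, ?_⟩
        · intro x hx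
          rcases msupp_add _ _ hx with h | h
          · exact Finset.mem_coe.mpr
              (Finset.mem_union_left _ (Finset.mem_coe.mp (hsμ (msupp_smul _ _ h))))
          · exact Finset.mem_coe.mpr
              (Finset.mem_union_right _ (Finset.mem_coe.mp (htν (msupp_smul _ _ h))))
        · exact (Finset.card_union_le s t).trans (Nat.add_le_add hcs hct)
      refine le_trans ?_
        (le_iSup₂ (f := fun (ρ : Measure X) (_ : ρ ∈ Rn R (m + n)) => ⨅ σ ∈ S, energy k ρ σ)
          _ hmem)
      refine le_iInf₂ fun σ hσ => ?_
      haveI : IsFiniteMeasure σ := (hS hσ).1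
      rw [energy_lin k μ ν σ a b]
      gcongr
      · exact iInf₂_le σ hσ
      · exact iInf₂_le σ hσ
    by_cases hRm : (Rn R m).Nonempty
    · by_cases hRn : (Rn R n).Nonempty
      · haveI : Nonempty ↥(Rn R m) := hRm.to_subtype
        haveI : Nonempty ↥(Rn R n) := hRn.to_subtype
        simp only [qlow]
        rw [← iSup_subtype'' (Rn R m) (fun μ => ⨅ σ ∈ S, energy k μ σ),
          ← iSup_subtype'' (Rn R n) (fun μ => ⨅ σ ∈ S, energy k μ σ),
          ENNReal.mul_iSup, ENNReal.mul_iSup, ENNReal.iSup_add]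
        simp_rw [ENNReal.add_iSup]
        refine iSup_le fun μ => iSup_le fun ν => le_trans (key μ μ.2 ν ν.2) ?_
        rw [qlow]
      · rw [Set.not_nonempty_iff_eq_empty] at hRn
        have h0 : qlow k (Rn R n) S = 0 := by simp [qlow, hRn]
        rw [h0, mul_zero, add_zero]
        calc a * qlow k (Rn R m) S ≤ 1 * qlow k (Rn R m) S := by gcongr
          _ = qlow k (Rn R m) S := one_mul _
          _ ≤ _ := qlow_mono_left k S (Rn_mono R (Nat.le_add_right m n))
    · rw [Set.not_nonempty_iff_eq_empty] at hRm
      have h0 : qlow k (Rn R m) S = 0 := by simp [qlow, hRm]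
      rw [h0, mul_zero, zero_add]
      calc b * qlow k (Rn R n) S ≤ 1 * qlow k (Rn R n) S := by gcongr
        _ = qlow k (Rn R n) S := one_mul _
        _ ≤ _ := qlow_mono_left k S (Rn_mono R (Nat.le_add_left n m))
  · have hmono : Monotone fun n => qlow k (Rn R n) S :=
      fun i j hij => qlow_mono_left k S (Rn_mono R hij)
    exact ⟨_, tendsto_atTop_iSup hmono⟩

end
end
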